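/- arXiv:2406.05825 — 7 statements merged into one kernel-verified Lean document; each statement's English description precedes it below -/
import Mathlib

section
/- Let G be a finite connected simple graph on at least 2 vertices, let f be an independent broadcast on G, and let H be an isometric subgraph of G. If at least two vertices of H are broadcasting under f, then the restriction of f to H is an independent broadcast on H (in particular, f(x) ≤ ecc_H(x) for every vertex x of H). -/
variable {V : Type*}

/-- The eccentricity of a vertex: the maximum distance to any vertex. -/
noncomputable def ecc (G : SimpleGraph V) [Fintype V] (v : V) : ℕ :=
  Finset.univ.sup (fun u => G.dist u v)

/-- A broadcast on `G`: a function assigning each vertex a power at most its eccentricity. -/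
def IsBroadcast (G : SimpleGraph V) [Fintype V] (f : V → ℕ) : Prop :=
  ∀ v, f v ≤ ecc G v

/-- `u` hears the broadcasting vertex `v`. -/
def Hears (G : SimpleGraph V) (f : V → ℕ) (u v : V) : Prop :=
  0 < f v ∧ G.dist u v ≤ f v

/-- An independent broadcast: no broadcasting vertex hears another vertex. -/
def IsIndepBroadcast (G : SimpleGraph V) [Fintype V] (f : V → ℕ) : Prop :=
  IsBroadcast G f ∧ ∀ v w, 0 < f v → v ≠ w → ¬ Hears G f v w

/-- if `f` is an independent broadcast on a finite connected graph `G` on at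
least two vertices and `H = G.induce s` is an isometric subgraph with at least two
broadcasting vertices, then the restriction of `f` to `H` is an independent broadcast on `H`. -/
theorem stmt0 [Fintype V] (G : SimpleGraph V) (hG : G.Connected)
    (hV : 1 < Fintype.card V) (f : V → ℕ) (hf : IsIndepBroadcast G f)
    (s : Set V) [Fintype s]
    (hiso : ∀ x y : s, (G.induce s).dist x y = G.dist x y)
    (h2 : ∃ x y : s, x ≠ y ∧ 0 < f x ∧ 0 < f y) :
    IsIndepBroadcast (G.induce s) (fun x => f x) := by
  obtain ⟨hb, hind⟩ := hf
  constructor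
  · intro x
    rcases Nat.eq_zero_or_pos (f x) with h0 | hpos
    · simp [h0]
    · obtain ⟨a, b, hab, ha, hb'⟩ := h2
      -- pick a broadcasting vertex y ≠ x in s
      obtain ⟨y, hy, hyx⟩ : ∃ y : s, 0 < f y ∧ y ≠ x := by
        by_cases hxa : x = a
        · exact ⟨b, hb', fun h => hab (hxa ▸ h.symm)⟩
        · exact ⟨a, ha, fun h => hxa h.symm⟩
      have hxy : (x : V) ≠ (y : V) := fun h => hyx (Subtype.ext h.symm)
      have hnh := hind y x hy (fun h => hyx (Subtype.ext h))
      have hd : f x < G.dist (y : V) (x : V) := by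
        by_contra hle
        exact hnh ⟨hpos, le_of_not_gt hle⟩
      calc f x ≤ G.dist (y : V) (x : V) := le_of_lt hd
        _ = (G.induce s).dist y x := (hiso y x).symm
        _ ≤ ecc (G.induce s) x := Finset.le_sup (f := fun u => (G.induce s).dist u x) (Finset.mem_univ y)
  · intro v w hv hvw ⟨hw, hd⟩
    rw [hiso v w] at hd
    exact hind v w hv (fun h => hvw (Subtype.ext h)) ⟨hw, hd⟩
end

section
/- Let G be a finite connected simple graph on at least 2 vertices, let f be an independent broadcast on G, and let H_1, H_2, …, H_k be pairwise vertex-disjoint isometric subgraphs of G, each containing at least two vertices that are broadcasting under f. Then f(V(G)) ≤ Σ_{i=1}^{k} α_b(H_i) + Σ_{v ∈ V(G) \ (V(H_1)∪…∪V(H_k))} f(v). -/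
variable {V : Type*}

/-- The broadcast independence number: the maximum weight of an independent broadcast. -/
noncomputable def alphaB (G : SimpleGraph V) [Fintype V] : ℕ :=
  sSup {w | ∃ f, IsIndepBroadcast G f ∧ w = ∑ v, f v}

lemma weight_le_alphaB [Fintype V] (G : SimpleGraph V) (f : V → ℕ)
    (h : IsIndepBroadcast G f) : ∑ v, f v ≤ alphaB G := by
  apply le_csSup
  · refine ⟨∑ v, ecc G v, ?_⟩
    rintro w ⟨g, hg, rfl⟩
    exact Finset.sum_le_sum fun v _ => hg.1 v
  · exact ⟨f, h, rfl⟩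

/-- if `f` is an independent broadcast on a finite connected graph `G` on at
least two vertices and `H_1, …, H_n` are pairwise vertex-disjoint isometric subgraphs of `G`,
each containing at least two broadcasting vertices, then
`f(V(G)) ≤ Σ_i α_b(H_i) + Σ_{v ∉ ∪ V(H_i)} f(v)`. -/
theorem stmt1 [Fintype V] [DecidableEq V] (G : SimpleGraph V) (hG : G.Connected)
    (hV : 1 < Fintype.card V) (f : V → ℕ) (hf : IsIndepBroadcast G f)
    (n : ℕ) (s : Fin n → Finset V)
    (hdisj : ∀ i j, i ≠ j → Disjoint (s i) (s j))
    (hiso : ∀ i, ∀ x y : (s i : Set V), (G.induce (s i : Set V)).dist x y = G.dist x y)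
    (h2 : ∀ i, ∃ x y : (s i : Set V), x ≠ y ∧ 0 < f x ∧ 0 < f y) :
    ∑ v, f v ≤ (∑ i, alphaB (G.induce ((s i : Set V)))) +
      ∑ v ∈ Finset.univ \ Finset.univ.biUnion s, f v := by
  classical
  have hstep : ∀ i, ∑ v ∈ s i, f v ≤ alphaB (G.induce ((s i : Set V))) := by
    intro i
    set H := G.induce ((s i : Set V)) with hH
    have hind : IsIndepBroadcast H (fun x => f ↑x) := by
      constructor
      · intro x
        rcases Nat.eq_zero_or_pos (f ↑x) with h0 | hpos
        · simp [h0]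
        · obtain ⟨a, b, hab, ha, hb⟩ := h2 i
          have hz : ∃ z : ((s i : Set V) : Type _), z ≠ x ∧ 0 < f ↑z := by
            rcases ne_or_eq a x with hax | hax
            · exact ⟨a, hax, ha⟩
            · exact ⟨b, by rw [← hax]; exact hab.symm, hb⟩
          obtain ⟨z, hzx, hzpos⟩ := hz
          have hne : (↑z : V) ≠ ↑x := fun h => hzx (Subtype.ext h)
          have hnh := hf.2 ↑z ↑x hzpos hne
          have hlt : f ↑x < G.dist ↑z ↑x := by
            by_contra hle
            push_neg at hle
            exact hnh ⟨hpos, hle⟩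
          have hle2 : H.dist z x ≤ ecc H x :=
            Finset.le_sup (f := fun u => H.dist u x) (Finset.mem_univ z)
          have heq : H.dist z x = G.dist ↑z ↑x := hiso i z x
          show f ↑x ≤ ecc H x
          omega
      · intro v w hv hvw hhear
        obtain ⟨hw, hd⟩ := hhear
        have hne : (↑v : V) ≠ ↑w := fun h => hvw (Subtype.ext h)
        have : G.dist ↑v ↑w ≤ f ↑w := by rw [← hiso i v w]; exact hd
        exact hf.2 ↑v ↑w hv hne ⟨hw, this⟩
    have hle := weight_le_alphaB _ _ hind
    calc ∑ v ∈ s i, f v = ∑ x : ((s i : Set V) : Type _), f ↑x := by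
          rw [Finset.sum_set_coe]
          simp
      _ ≤ alphaB (G.induce ((s i : Set V))) := hle
  have hpd : (↑(Finset.univ : Finset (Fin n)) : Set (Fin n)).PairwiseDisjoint s :=
    fun i _ j _ hij => hdisj i j hij
  have hsplit : ∑ v, f v =
      (∑ v ∈ Finset.univ.biUnion s, f v) + ∑ v ∈ Finset.univ \ Finset.univ.biUnion s, f v := by
    rw [add_comm, Finset.sum_sdiff (Finset.subset_univ _)]
  rw [hsplit, Finset.sum_biUnion hpd]
  gcongr with i
  exact hstep i
end

section
/- Let T = T_h^k be a perfect k-ary tree with k ≥ 2 and h ≥ 1, and let f be an independent broadcast on T of maximum weight (an α_b-broadcast). Then every leaf of T hears some broadcasting leaf; that is, for every leaf l there exists a leaf l' with f(l') > 0 and d(l, l') ≤ f(l'). -/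
variable {V : Type*}

/-- Vertices of the perfect `k`-ary tree of height `h`: strings of length at most `h`
over a `k`-letter alphabet. -/
abbrev KVert (k h : ℕ) : Type := {l : List (Fin k) // l.length ≤ h}

noncomputable instance (k h : ℕ) : Fintype (KVert k h) :=
  (List.finite_length_le (Fin k) h).fintype

/-- The perfect `k`-ary tree of height `h`: each string of length less than `h` is
adjacent to its `k` one-letter extensions. -/
def karyTree (k h : ℕ) : SimpleGraph (KVert k h) where
  Adj x y := (∃ a : Fin k, x.1 = a :: y.1) ∨ (∃ a : Fin k, y.1 = a :: x.1)
  symm := ⟨fun x y hxy => hxy.symm⟩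
  loopless := by
    constructor
    rintro x (⟨a, ha⟩ | ⟨a, ha⟩) <;>
    · have := congrArg List.length ha
      rw [List.length_cons] at this
      omega

/-- A leaf of the perfect `k`-ary tree of height `h`: a string of length `h`. -/
def IsKLeaf (k h : ℕ) (v : KVert k h) : Prop := v.1.length = h

namespace KaryAux

variable {α : Type*} [DecidableEq α]

def cpre : List α → List α → ℕ
  | a :: s, b :: t => if a = b then cpre s t + 1 else 0
  | _, _ => 0

theorem cpre_le_left : ∀ s t : List α, cpre s t ≤ s.length
  | [], t => by simp [cpre]
  | a :: s, [] => by simp [cpre]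
  | a :: s, b :: t => by
    simp only [cpre, List.length_cons]
    split
    · exact Nat.succ_le_succ (cpre_le_left s t)
    · omega

theorem cpre_comm : ∀ s t : List α, cpre s t = cpre t s
  | [], t => by cases t <;> simp [cpre]
  | a :: s, [] => by simp [cpre]
  | a :: s, b :: t => by
    simp only [cpre]
    rcases eq_or_ne a b with rfl | hab
    · simp [cpre_comm s t]
    · simp [hab, hab.symm]

theorem cpre_exists : ∀ s t : List α, ∃ p : List α, p <+: s ∧ p <+: t ∧ p.length = cpre s t
  | [], t => ⟨[], by simp [cpre]⟩
  | a :: s, [] => ⟨[], by simp [cpre]⟩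
  | a :: s, b :: t => by
    rcases eq_or_ne a b with rfl | hab
    · obtain ⟨p, hp1, hp2, hp3⟩ := cpre_exists s t
      exact ⟨a :: p, by simpa [List.cons_prefix_cons] using hp1,
        by simpa [List.cons_prefix_cons] using hp2, by simp [cpre, hp3]⟩
    · exact ⟨[], by simp [cpre, hab]⟩

theorem cpre_max : ∀ (p s t : List α), p <+: s → p <+: t → p.length ≤ cpre s t
  | [], s, t, _, _ => Nat.zero_le _
  | c :: p, a :: s, b :: t, hs, ht => by
    rw [List.cons_prefix_cons] at hs ht
    obtain ⟨rfl, hs⟩ := hs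
    obtain ⟨rfl, ht⟩ := ht
    simpa [cpre] using cpre_max p s t hs ht
  | c :: p, [], t, hs, ht => by simp at hs
  | c :: p, a :: s, [], hs, ht => by simp at ht

/-- Length of the longest common suffix. -/
def csuf (x y : List α) : ℕ := cpre x.reverse y.reverse

theorem csuf_le_left (x y : List α) : csuf x y ≤ x.length := by
  simpa [csuf] using cpre_le_left x.reverse y.reverse

theorem csuf_comm (x y : List α) : csuf x y = csuf y x := cpre_comm _ _

theorem csuf_le_right (x y : List α) : csuf x y ≤ y.length := by
  rw [csuf_comm]; exact csuf_le_left y x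

theorem csuf_exists (x y : List α) :
    ∃ s : List α, s <:+ x ∧ s <:+ y ∧ s.length = csuf x y := by
  obtain ⟨p, h1, h2, h3⟩ := cpre_exists x.reverse y.reverse
  refine ⟨p.reverse, ?_, ?_, by simpa [csuf] using h3⟩
  · rw [← List.reverse_prefix]; simpa using h1
  · rw [← List.reverse_prefix]; simpa using h2

theorem csuf_max {s x y : List α} (hx : s <:+ x) (hy : s <:+ y) : s.length ≤ csuf x y := by
  have := cpre_max s.reverse x.reverse y.reverse
    (by simpa [List.reverse_prefix] using hx) (by simpa [List.reverse_prefix] using hy)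
  simpa [csuf] using this

theorem csuf_of_suffix {x y : List α} (hxy : y <:+ x) : csuf x y = y.length :=
  le_antisymm (csuf_le_right x y) (csuf_max hxy List.suffix_rfl)

theorem suffix_of_csuf {x y : List α} (hxy : csuf x y = y.length) : y <:+ x := by
  obtain ⟨s, hs1, hs2, hs3⟩ := csuf_exists x y
  have : s = y := hs2.eq_of_length (by omega)
  exact this ▸ hs1

theorem csuf_cons_ge (a : α) (x y : List α) : csuf x y ≤ csuf (a :: x) y := by
  obtain ⟨s, hs1, hs2, hs3⟩ := csuf_exists x y
  rw [← hs3]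
  exact csuf_max (hs1.trans (List.suffix_cons a x)) hs2

theorem csuf_cons_le (a : α) (x y : List α) : csuf (a :: x) y ≤ csuf x y + 1 := by
  obtain ⟨s, hs1, hs2, hs3⟩ := csuf_exists (a :: x) y
  rw [← hs3]
  rcases List.suffix_cons_iff.mp hs1 with rfl | hsx
  · have hxy : x <:+ y := (List.suffix_cons a x).trans hs2
    have := csuf_max (List.suffix_rfl (l := x)) hxy
    simp only [List.length_cons]
    omega
  · have := csuf_max hsx hs2
    omega


variable {k h : ℕ}

theorem walk_to_suffix : ∀ n : ℕ, ∀ x y : KVert k h, x.1.length ≤ n → y.1 <:+ x.1 →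
    ∃ p : (karyTree k h).Walk x y, p.length = x.1.length - y.1.length := by
  intro n
  induction n with
  | zero =>
    intro x y hn hs
    have : y = x := Subtype.ext (hs.eq_of_length (by have := hs.length_le; omega))
    subst this
    exact ⟨SimpleGraph.Walk.nil, by simp⟩
  | succ n ih =>
    intro x y hn hs
    rcases eq_or_ne y x with rfl | hne
    · exact ⟨SimpleGraph.Walk.nil, by simp⟩
    · have hlt : y.1.length < x.1.length := by
        have := hs.length_le
        rcases lt_or_eq_of_le this with h' | h'
        · exact h'
        · exact absurd (Subtype.ext (hs.eq_of_length h')) hne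
      obtain ⟨a, t, hx⟩ : ∃ a t, x.1 = a :: t := by
        cases hxv : x.1 with
        | nil => rw [hxv] at hlt; simp at hlt
        | cons a t => exact ⟨a, t, rfl⟩
      have htlen : t.length ≤ h := by have := x.2; rw [hx] at this; simp at this; omega
      have hadj : (karyTree k h).Adj x ⟨t, htlen⟩ := by left; exact ⟨a, by rw [hx]⟩
      have hs' : y.1 <:+ t := by
        have h2 := hs
        rw [hx] at h2
        rcases List.suffix_cons_iff.mp h2 with h' | h'
        · exfalso; rw [hx, h'] at hlt; simp at hlt
        · exact h'
      obtain ⟨p, hp⟩ := ih ⟨t, htlen⟩ y (show t.length ≤ n by rw [hx] at hn; simp at hn; omega) hs'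
      have hp' : p.length = t.length - y.1.length := hp
      refine ⟨SimpleGraph.Walk.cons hadj p, ?_⟩
      have hxl : x.1.length = t.length + 1 := by rw [hx]; simp
      have := hs'.length_le
      simp only [SimpleGraph.Walk.length_cons, hp']
      omega

theorem exists_walk (x y : KVert k h) :
    ∃ p : (karyTree k h).Walk x y, p.length = x.1.length + y.1.length - 2 * csuf x.1 y.1 := by
  obtain ⟨s, hsx, hsy, hslen⟩ := csuf_exists x.1 y.1
  have hsle : s.length ≤ h := hsy.length_le.trans y.2
  obtain ⟨p1, hp1⟩ := walk_to_suffix x.1.length x ⟨s, hsle⟩ le_rfl hsx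
  obtain ⟨p2, hp2⟩ := walk_to_suffix y.1.length y ⟨s, hsle⟩ le_rfl hsy
  refine ⟨p1.append p2.reverse, ?_⟩
  have h1 := csuf_le_left x.1 y.1
  have h2 := csuf_le_right x.1 y.1
  have e1 : hsx.length_le = hsx.length_le := rfl
  have l1 := hsx.length_le
  have l2 := hsy.length_le
  simp only [SimpleGraph.Walk.length_append, SimpleGraph.Walk.length_reverse, hp1, hp2]
  omega

theorem walk_length_lb {x y : KVert k h} (p : (karyTree k h).Walk x y) :
    x.1.length + y.1.length - 2 * csuf x.1 y.1 ≤ p.length := by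
  induction p with
  | nil => simp only [SimpleGraph.Walk.length_nil, csuf_of_suffix (List.suffix_rfl)]; omega
  | @cons u v w hadj p ih =>
    simp only [SimpleGraph.Walk.length_cons]
    have c3 := csuf_le_left v.1 w.1
    have c4 := csuf_le_right v.1 w.1
    rcases (show (∃ a : Fin k, u.1 = a :: v.1) ∨ (∃ a : Fin k, v.1 = a :: u.1) from hadj) with ⟨a, ha⟩ | ⟨a, ha⟩
    · -- u.1 = a :: v.1
      have hge := csuf_cons_ge a v.1 w.1
      rw [ha]
      simp only [List.length_cons]
      omega
    · -- v.1 = a :: u.1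
      have hle := csuf_cons_le a u.1 w.1
      rw [ha] at ih c3
      simp only [List.length_cons] at ih c3
      have c1 := csuf_le_left u.1 w.1
      omega

theorem kdist_eq (x y : KVert k h) :
    (karyTree k h).dist x y = x.1.length + y.1.length - 2 * csuf x.1 y.1 := by
  obtain ⟨p, hp⟩ := exists_walk x y
  refine le_antisymm (hp ▸ SimpleGraph.dist_le p) ?_
  obtain ⟨q, hq⟩ := SimpleGraph.Reachable.exists_walk_length_eq_dist ⟨p⟩
  exact hq ▸ walk_length_lb q


theorem csuf_eq_of_subtree {α : Type*} [DecidableEq α] {u w q : List α}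
    (hwu : w <:+ u) (hq : ¬ w <:+ q) : csuf u q = csuf w q := by
  refine le_antisymm ?_ ?_
  · obtain ⟨s, hsu, hsq, hslen⟩ := csuf_exists u q
    rcases List.suffix_or_suffix_of_suffix hsu hwu with hs | hs
    · exact hslen ▸ csuf_max hs hsq
    · exact absurd (hs.trans hsq) hq
  · obtain ⟨s, hsw, hsq, hslen⟩ := csuf_exists w q
    exact hslen ▸ csuf_max (hsw.trans hwu) hsq

theorem dist_of_suffix {x y : KVert k h} (hxy : y.1 <:+ x.1) :
    (karyTree k h).dist x y = x.1.length - y.1.length := by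
  rw [kdist_eq, csuf_of_suffix hxy]
  have := hxy.length_le
  omega

theorem ecc_le (v : KVert k h) : ecc (karyTree k h) v ≤ h + v.1.length := by
  unfold ecc
  refine Finset.sup_le fun u _ => ?_
  rw [kdist_eq]
  have := u.2
  omega

theorem dist_le_ecc (u v : KVert k h) : (karyTree k h).dist u v ≤ ecc (karyTree k h) v := by
  unfold ecc
  exact Finset.le_sup (f := fun z => (karyTree k h).dist z v) (Finset.mem_univ u)

theorem ecc_leaf_ge (hk : 2 ≤ k) (hh : 1 ≤ h) (u : KVert k h) (hu : u.1.length = h) :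
    2 * h ≤ ecc (karyTree k h) u := by
  have hne : u.1.reverse ≠ [] := by
    simp only [ne_eq, List.reverse_eq_nil_iff]
    intro e
    rw [e] at hu; simp at hu; omega
  obtain ⟨c, s, heq⟩ := List.exists_cons_of_ne_nil hne
  obtain ⟨a, ha⟩ : ∃ a : Fin k, a ≠ c :=
    Fintype.exists_ne_of_one_lt_card (by simpa using (by omega : 1 < k)) c
  have hcs : csuf (List.replicate h a) u.1 = 0 := by
    show cpre (List.replicate h a).reverse u.1.reverse = 0
    rw [List.reverse_replicate, heq]
    obtain ⟨h', rfl⟩ : ∃ h', h = h' + 1 := ⟨h - 1, by omega⟩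
    simp [List.replicate_succ, cpre, ha]
  have hle := dist_le_ecc (⟨List.replicate h a, by simp⟩ : KVert k h) u
  rw [kdist_eq] at hle
  simp only [List.length_replicate] at hle
  rw [hcs] at hle
  omega

theorem weight_le_alphaB {W : Type*} [Fintype W] (G : SimpleGraph W) {g : W → ℕ}
    (hg : IsIndepBroadcast G g) : ∑ v, g v ≤ alphaB G := by
  apply le_csSup
  · refine ⟨∑ v, ecc G v, fun w hw => ?_⟩
    obtain ⟨g', hg', rfl⟩ := hw
    exact Finset.sum_le_sum fun v _ => hg'.1 v
  · exact ⟨g, hg, rfl⟩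

theorem harith (H W Q C : ℕ) (h1 : C ≤ W) (h2 : W ≤ H) (h3 : C ≤ Q) :
    H + Q - 2 * C = W + Q - 2 * C + (H - W) := by
  omega

theorem indep_dist {W : Type*} [Fintype W] {G : SimpleGraph W} {g : W → ℕ}
    (hg : IsIndepBroadcast G g) {v w : W} (hv : 0 < g v) (hw : 0 < g w) (hne : v ≠ w) :
    g w < G.dist v w := by
  have := hg.2 v w hv hne
  unfold Hears at this
  push_neg at this
  exact this hw

end KaryAux


open KaryAux in
/-- in a maximum-weight independent broadcast on a perfect `k`-ary tree
(`k ≥ 2`, `h ≥ 1`), every leaf hears some broadcasting leaf. -/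
theorem stmt2 (k h : ℕ) (hk : 2 ≤ k) (hh : 1 ≤ h) (f : KVert k h → ℕ)
    (hf : IsIndepBroadcast (karyTree k h) f) (hmax : ∑ v, f v = alphaB (karyTree k h)) :
    ∀ l : KVert k h, IsKLeaf k h l →
      ∃ l' : KVert k h, IsKLeaf k h l' ∧ 0 < f l' ∧ (karyTree k h).dist l l' ≤ f l' := by
  intro l hl
  by_contra hno
  push_neg at hno
  have hl' : l.1.length = h := hl
  have hfl : f l = 0 := by
    by_contra hfl'
    have h1 := hno l hl (Nat.pos_of_ne_zero hfl')
    rw [SimpleGraph.dist_self] at h1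
    omega
  by_cases hB : ∃ v, 0 < f v ∧ (karyTree k h).dist l v ≤ f v
  · -- Case B: l hears some broadcasting vertex v, necessarily internal
    obtain ⟨v, hv0, hvd⟩ := hB
    have hvleaf : v.1.length ≠ h := by
      intro heq
      exact absurd hvd (not_le_of_gt (hno v heq hv0))
    have hvlt : v.1.length < h := lt_of_le_of_ne v.2 hvleaf
    set S : Finset (KVert k h) := Finset.univ.filter (fun w => 0 < f w ∧ v.1 <:+ w.1) with hS
    have hvS : v ∈ S := Finset.mem_filter.mpr ⟨Finset.mem_univ v, hv0, List.suffix_rfl⟩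
    obtain ⟨wst, hwS, hmaxS⟩ := Finset.exists_max_image S (fun w => w.1.length) ⟨v, hvS⟩
    obtain ⟨-, hw0, hvw⟩ := Finset.mem_filter.mp hwS
    have hvL : v.1.length ≤ wst.1.length := hvw.length_le
    rcases eq_or_lt_of_le wst.2 with hLh | hLh
    · -- wst is a leaf: contradiction with l hearing v
      have hne : wst ≠ v := fun e => by rw [← e] at hvlt; omega
      have h1 : f v < (karyTree k h).dist wst v := indep_dist hf hw0 hv0 hne
      rw [dist_of_suffix hvw] at h1
      have h2 : (karyTree k h).dist l v = h + v.1.length - 2 * csuf l.1 v.1 := by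
        rw [kdist_eq, hl']
      have h3 := csuf_le_right l.1 v.1
      omega
    · -- wst is internal: move its broadcast to a descendant leaf
      obtain ⟨u, hulen, hwu⟩ : ∃ u : KVert k h, u.1.length = h ∧ wst.1 <:+ u.1 := by
        refine ⟨⟨List.replicate (h - wst.1.length) ⟨0, by omega⟩ ++ wst.1, ?_⟩, ?_, ?_⟩
        · rw [List.length_append, List.length_replicate]; omega
        · show (List.replicate _ _ ++ wst.1).length = h
          rw [List.length_append, List.length_replicate]; omega
        · exact ⟨_, rfl⟩
      have hune : u ≠ wst := fun e => by rw [e] at hulen; omega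
      have hfu : f u = 0 := by
        by_contra hfu'
        have huS : u ∈ S := Finset.mem_filter.mpr
          ⟨Finset.mem_univ u, Nat.pos_of_ne_zero hfu', hvw.trans hwu⟩
        have := hmaxS u huS
        omega
      set f' : KVert k h → ℕ :=
        Function.update (Function.update f wst 0) u (f wst + (h - wst.1.length)) with hf'
      have hf'u : f' u = f wst + (h - wst.1.length) := Function.update_self _ _ _
      have hf'w : f' wst = 0 := by
        rw [hf', Function.update_of_ne (Ne.symm hune), Function.update_self]
      have hf'q : ∀ q, q ≠ u → q ≠ wst → f' q = f q := fun q hqu hqw => by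
        rw [hf', Function.update_of_ne hqu, Function.update_of_ne hqw]
      have hsep : ∀ q : KVert k h, 0 < f q → q ≠ wst → q ≠ u →
          (karyTree k h).dist u q = (karyTree k h).dist wst q + (h - wst.1.length) := by
        intro q hq hqw hqu
        have hnsub : ¬ wst.1 <:+ q.1 := by
          intro hsub
          have hqS : q ∈ S := Finset.mem_filter.mpr ⟨Finset.mem_univ q, hq, hvw.trans hsub⟩
          have h1 := hmaxS q hqS
          have h2 := hsub.length_le
          exact hqw (Subtype.ext (hsub.eq_of_length (by omega)).symm)
        have hcs := csuf_eq_of_subtree hwu hnsub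
        rw [kdist_eq, kdist_eq, hcs, hulen]
        have c1 := csuf_le_left wst.1 q.1
        exact harith h wst.1.length q.1.length (csuf wst.1 q.1) c1 (le_of_lt hLh)
          (csuf_le_right wst.1 q.1)
      have hindep : IsIndepBroadcast (karyTree k h) f' := by
        constructor
        · intro q
          by_cases hqu : q = u
          · rw [hqu, hf'u]
            have h1 : f wst ≤ h + wst.1.length := (hf.1 wst).trans (ecc_le wst)
            have h2 := ecc_leaf_ge hk hh u hulen
            omega
          · by_cases hqw : q = wst
            · rw [hqw, hf'w]; exact Nat.zero_le _
            · rw [hf'q q hqu hqw]; exact hf.1 q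
        · rintro p q hp hpq ⟨hq1, hq2⟩
          have hpw : p ≠ wst := fun e => by rw [e, hf'w] at hp; omega
          have hqw : q ≠ wst := fun e => by rw [e, hf'w] at hq1; omega
          by_cases hpu : p = u
          · have hqu : q ≠ u := fun e => hpq (by rw [hpu, e])
            rw [hf'q q hqu hqw] at hq1 hq2
            rw [hpu] at hq2
            have hd := hsep q hq1 hqw hqu
            have h2 := indep_dist hf hw0 hq1 (show wst ≠ q from fun e => hqw e.symm)
            omega
          · by_cases hqu : q = u
            · rw [hf'q p hpu hpw] at hp
              rw [hqu, hf'u] at hq2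
              have hd := hsep p hp hpw hpu
              have hcomm : (karyTree k h).dist p u = (karyTree k h).dist u p :=
                SimpleGraph.dist_comm
              have h2 := indep_dist hf hp hw0 hpw
              have hcomm2 : (karyTree k h).dist p wst = (karyTree k h).dist wst p :=
                SimpleGraph.dist_comm
              omega
            · rw [hf'q p hpu hpw] at hp
              rw [hf'q q hqu hqw] at hq1 hq2
              exact hf.2 p q hp hpq ⟨hq1, hq2⟩
      have hsum : ∑ x, f' x = ∑ x, f x + (h - wst.1.length) := by
        rw [hf', Finset.sum_update_of_mem (Finset.mem_univ u)]
        have e1 : ∑ x ∈ Finset.univ \ {u}, Function.update f wst 0 x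
            = ∑ x ∈ Finset.univ, Function.update f wst 0 x - Function.update f wst 0 u := by
          rw [Finset.sum_eq_sum_sdiff_singleton_add (Finset.mem_univ u)]
          omega
        have e2 : Function.update f wst 0 u = 0 := by
          rw [Function.update_of_ne hune, hfu]
        have e3 : ∑ x ∈ Finset.univ, Function.update f wst 0 x = ∑ x, f x - f wst := by
          rw [Finset.sum_update_of_mem (Finset.mem_univ wst)]
          rw [Finset.sum_eq_sum_sdiff_singleton_add (Finset.mem_univ wst) f]
          omega
        have e4 : f wst ≤ ∑ x, f x :=
          Finset.single_le_sum (fun i _ => Nat.zero_le (f i)) (Finset.mem_univ wst)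
        rw [e1, e2, e3]
        omega
      have hle := weight_le_alphaB (karyTree k h) hindep
      rw [← hmax, hsum] at hle
      omega
  · -- Case A: l hears nobody; add a broadcast of power 1 at l
    push_neg at hB
    set f' : KVert k h → ℕ := Function.update f l 1 with hf'
    have hf'l : f' l = 1 := Function.update_self _ _ _
    have hf'q : ∀ q, q ≠ l → f' q = f q := fun q hq => Function.update_of_ne hq _ _
    have hindep : IsIndepBroadcast (karyTree k h) f' := by
      constructor
      · intro q
        by_cases hq : q = l
        · rw [hq, hf'l]
          have := ecc_leaf_ge hk hh l hl'
          omega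
        · rw [hf'q q hq]; exact hf.1 q
      · rintro p q hp hpq ⟨hq1, hq2⟩
        by_cases hpl : p = l
        · have hql : q ≠ l := fun e => hpq (by rw [hpl, e])
          rw [hf'q q hql] at hq1 hq2
          rw [hpl] at hq2
          exact absurd hq2 (not_le_of_gt (hB q hq1))
        · by_cases hql : q = l
          · rw [hf'q p hpl] at hp
            rw [hql, hf'l] at hq2
            have h1 := hB p hp
            have h2 : (karyTree k h).dist p l = (karyTree k h).dist l p :=
              SimpleGraph.dist_comm
            omega
          · rw [hf'q p hpl] at hp
            rw [hf'q q hql] at hq1 hq2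
            exact hf.2 p q hp hpq ⟨hq1, hq2⟩
    have hsum : ∑ x, f' x = ∑ x, f x + 1 := by
      rw [hf', Finset.sum_update_of_mem (Finset.mem_univ l)]
      rw [Finset.sum_eq_sum_sdiff_singleton_add (Finset.mem_univ l) f, hfl]
      omega
    have hle := weight_le_alphaB (karyTree k h) hindep
    rw [← hmax, hsum] at hle
    omega
end

section
/- Let T = S(d_1,…,d_k) be a spider, let t be an integer with 1 ≤ t ≤ k − 1, and let f be an independent broadcast on T whose set of broadcasting vertices is exactly {l_t, l_{t+1}, …, l_k}. Then the weight of f satisfies f(V) ≤ (d_t + d_{t+1} − 1) + Σ_{j=t+1}^{k} (d_t + d_j − 1). -/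
variable {V : Type*}

/-- Vertices of the spider `S(d 0, …, d (k-1))`: `none` is the branch vertex `u`, and
`some ⟨i, j⟩` is the vertex at distance `j + 1` from `u` on the `i`-th branch. -/
abbrev SpiderVert (k : ℕ) (d : Fin k → ℕ) : Type := Option (Σ i : Fin k, Fin (d i))

/-- The spider `S(d 0, …, d (k-1))`: the tree obtained from the star `K_{1,k}` with
center `u` by subdividing edges so that the `i`-th leaf is at distance `d i` from `u`. -/
def spider (k : ℕ) (d : Fin k → ℕ) : SimpleGraph (SpiderVert k d) where
  Adj x y :=
    match x, y with
    | none, none => False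
    | none, some ⟨_, j⟩ => (j : ℕ) = 0
    | some ⟨_, j⟩, none => (j : ℕ) = 0
    | some ⟨i, j⟩, some ⟨i', j'⟩ =>
        (i : ℕ) = (i' : ℕ) ∧ ((j : ℕ) + 1 = (j' : ℕ) ∨ (j' : ℕ) + 1 = (j : ℕ))
  symm := ⟨by
    rintro (_ | ⟨i, j⟩) (_ | ⟨i', j'⟩) hxy <;> simp_all <;> omega⟩
  loopless := ⟨by
    rintro (_ | ⟨i, j⟩) hxy <;> simp_all⟩

/-- The `i`-th leaf of the spider, at distance `d i` from the branch vertex. -/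
def spiderLeaf (k : ℕ) (d : Fin k → ℕ) (hd : ∀ i, 1 ≤ d i) (i : Fin k) : SpiderVert k d :=
  some ⟨i, ⟨d i - 1, by have := hd i; omega⟩⟩

/-- A leaf of the spider: the end vertex of a branch. -/
def IsSpiderLeaf (k : ℕ) (d : Fin k → ℕ) : SpiderVert k d → Prop
  | none => False
  | some ⟨i, j⟩ => (j : ℕ) + 1 = d i

section Aux

variable {k : ℕ} {d : Fin k → ℕ}

/-- Walk from the branch vertex to the `j`-th vertex of branch `i`. -/
def branchWalk (i : Fin k) : ∀ (j : ℕ) (h : j < d i),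
    (spider k d).Walk none (some ⟨i, ⟨j, h⟩⟩)
  | 0, h => SimpleGraph.Walk.cons
      (show (spider k d).Adj none (some ⟨i, ⟨0, h⟩⟩) from rfl) SimpleGraph.Walk.nil
  | j + 1, h => (branchWalk i j (by omega)).concat
      (show (i : ℕ) = (i : ℕ) ∧ _ from ⟨rfl, Or.inl rfl⟩)

lemma branchWalk_length (i : Fin k) (j : ℕ) (h : j < d i) :
    (branchWalk i j h).length = j + 1 := by
  induction j with
  | zero => simp [branchWalk]
  | succ n ih =>
    rw [branchWalk]
    exact (SimpleGraph.Walk.length_concat _ _).trans (congrArg (· + 1) (ih _))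

lemma dist_leaf_leaf (hd : ∀ i, 1 ≤ d i) (i j : Fin k) (hij : i ≠ j) :
    (spider k d).dist (spiderLeaf k d hd i) (spiderLeaf k d hd j) ≤ d i + d j := by
  have hi := hd i
  have hj := hd j
  have hle := SimpleGraph.dist_le
    (((branchWalk i (d i - 1) (by omega)).reverse).append
      (branchWalk (d := d) j (d j - 1) (by omega)))
  rw [SimpleGraph.Walk.length_append, SimpleGraph.Walk.length_reverse,
    branchWalk_length, branchWalk_length] at hle
  exact hle.trans (by omega)

end Aux

/-- if `f` is an independent broadcast on a spider whose broadcasting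
vertices are exactly the leaves `l_t, …, l_k` (here `t` is a 0-based index with
`t + 1 < k`, corresponding to the 1-based range `1 ≤ t ≤ k - 1`), then
`f(V) ≤ (d_t + d_{t+1} - 1) + Σ_{j > t} (d_t + d_j - 1)`. -/
theorem stmt10 (k : ℕ) (hk : 3 ≤ k) (d : Fin k → ℕ) (hd : ∀ i, 1 ≤ d i)
    (hmono : Monotone d) (t : Fin k) (ht : (t : ℕ) + 1 < k)
    (f : SpiderVert k d → ℕ) (hf : IsIndepBroadcast (spider k d) f)
    (hsupp : ∀ v : SpiderVert k d, 0 < f v ↔ ∃ j : Fin k, t ≤ j ∧ v = spiderLeaf k d hd j) :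
    ∑ v, f v ≤ (d t + d ⟨(t : ℕ) + 1, ht⟩ - 1) + ∑ j ∈ Finset.Ioi t, (d t + d j - 1) := by
  classical
  set L : Fin k → SpiderVert k d := spiderLeaf k d hd with hL
  have hLinj : Function.Injective L := by
    intro a b hab
    exact congrArg Sigma.fst (Option.some.inj hab)
  -- key bound from independence
  have key : ∀ i j : Fin k, t ≤ i → t ≤ j → i ≠ j → f (L j) ≤ d i + d j - 1 := by
    intro i j hti htj hij
    have hi : 0 < f (L i) := (hsupp _).2 ⟨i, hti, rfl⟩
    have hj : 0 < f (L j) := (hsupp _).2 ⟨j, htj, rfl⟩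
    have hne : L i ≠ L j := fun h => hij (hLinj h)
    have hnh := hf.2 (L i) (L j) hi hne
    have hlt : f (L j) < (spider k d).dist (L i) (L j) := by
      by_contra hcon
      exact hnh ⟨hj, by omega⟩
    have hdd : (spider k d).dist (L i) (L j) ≤ d i + d j := dist_leaf_leaf hd i j hij
    have := hd i; have := hd j
    omega
  -- rewrite the sum as a sum over leaves ≥ t
  have hsum : ∑ v, f v = ∑ j ∈ Finset.Ici t, f (L j) := by
    rw [← Finset.sum_image (f := f) (g := L)
      (fun x _ y _ h => hLinj h)]
    refine (Finset.sum_subset (Finset.subset_univ _) ?_).symm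
    intro v _ hv
    by_contra h0
    have hpos : 0 < f v := Nat.pos_of_ne_zero h0
    obtain ⟨j, htj, rfl⟩ := (hsupp v).1 hpos
    exact hv (Finset.mem_image.2 ⟨j, Finset.mem_Ici.2 htj, rfl⟩)
  rw [hsum, ← Finset.Ioi_insert t,
    Finset.sum_insert (by simp)]
  have h1 : f (L t) ≤ d t + d ⟨(t : ℕ) + 1, ht⟩ - 1 := by
    have := key ⟨(t : ℕ) + 1, ht⟩ t (by simp [Fin.le_def]) le_rfl
      (by intro h; have := congrArg Fin.val h; simp at this)
    have hcomm : d ⟨(t : ℕ) + 1, ht⟩ + d t = d t + d ⟨(t : ℕ) + 1, ht⟩ := Nat.add_comm _ _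
    omega
  refine Nat.add_le_add h1 (Finset.sum_le_sum ?_)
  intro j hj
  have hlt : t < j := Finset.mem_Ioi.1 hj
  exact key t j le_rfl hlt.le hlt.ne
end

section
/- Let T_h be a perfect binary tree of height h = 3m + t ≥ 4 with 0 ≤ t ≤ 2. Let S ⊆ V(T_h) consist of: (1) all vertices at level h−1; (2) all vertices at levels h−2, h−5, …, 1+t (the levels congruent to h−2 modulo 3 that are at least 1+t); and (3) the root when t = 0 or t = 1, or both vertices at level 1 when t = 2. Then S is a multicover of T_h. -/
variable {V : Type*}

/-- A packing broadcast: every vertex hears at most one broadcasting vertex. -/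
def IsPackingBroadcast (G : SimpleGraph V) [Fintype V] (f : V → ℕ) : Prop :=
  IsBroadcast G f ∧ ∀ u : V, {v | Hears G f u v}.Subsingleton

/-- The broadcast packing number: the maximum weight of a packing broadcast. -/
noncomputable def Pb (G : SimpleGraph V) [Fintype V] : ℕ :=
  sSup {w | ∃ f, IsPackingBroadcast G f ∧ w = ∑ v, f v}

/-- A multicover: a set of vertices such that every ball of radius `r` (with
`1 ≤ r ≤ ecc v`) contains at least `r` of its elements. -/
def IsMulticover (G : SimpleGraph V) [Fintype V] (S : Finset V) : Prop :=
  ∀ v : V, ∀ r : ℕ, 1 ≤ r → r ≤ ecc G v → r ≤ (S.filter (fun u => G.dist u v ≤ r)).card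

/-- The multicover number: the minimum cardinality of a multicover. -/
noncomputable def Mc (G : SimpleGraph V) [Fintype V] : ℕ :=
  sInf {n | ∃ S : Finset V, IsMulticover G S ∧ n = S.card}

section StmtAux

lemma exists_walk_suffix (h : ℕ) : ∀ n (y x : KVert 2 h), y.1.length ≤ n → x.1 <:+ y.1 →
    ∃ p : (karyTree 2 h).Walk y x, p.length = y.1.length - x.1.length := by
  intro n
  induction n with
  | zero =>
    intro y x hy hs
    have hy0 : y.1 = [] := by
      have := y.1.length; cases hyl : y.1 with
      | nil => rfl
      | cons a l => rw [hyl] at hy; simp at hy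
    have hx0 : x.1 = [] := by
      have := hs.length_le
      rw [hy0] at this; simp at this
      exact this
    have hxy : x = y := Subtype.ext (by rw [hx0, hy0])
    subst hxy
    exact ⟨SimpleGraph.Walk.nil, by simp⟩
  | succ n ih =>
    intro y x hy hs
    by_cases hxy : x.1 = y.1
    · have hxy' : x = y := Subtype.ext hxy
      subst hxy'
      exact ⟨SimpleGraph.Walk.nil, by simp⟩
    · cases hyl : y.1 with
      | nil =>
        exfalso
        rw [hyl] at hs
        have := List.suffix_nil.1 hs
        rw [this, hyl] at hxy
        exact hxy rfl
      | cons a ys =>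
        have hysle : ys.length ≤ h := by
          have := y.2; rw [hyl] at this; simp at this; omega
        set y' : KVert 2 h := ⟨ys, hysle⟩ with hy'
        have hadj : (karyTree 2 h).Adj y y' := Or.inl ⟨a, by rw [hyl]⟩
        have hs' : x.1 <:+ ys := by
          rw [hyl] at hs
          rcases List.suffix_cons_iff.1 hs with h1 | h1
          · exact absurd (h1.trans hyl.symm) hxy
          · exact h1
        obtain ⟨p, hp⟩ := ih y' x (by
          show ys.length ≤ n
          rw [hyl] at hy; simp at hy; omega) hs'
        refine ⟨SimpleGraph.Walk.cons hadj p, ?_⟩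
        have hxle : x.1.length ≤ ys.length := hs'.length_le
        have hy'len : (y' : KVert 2 h).1.length = ys.length := rfl
        rw [SimpleGraph.Walk.length_cons, hp, hy'len]
        simp only [List.length_cons]
        omega

lemma dist_le_common_suffix (h : ℕ) (u v : KVert 2 h) (w : List (Fin 2))
    (hu : w <:+ u.1) (hv : w <:+ v.1) :
    (karyTree 2 h).dist u v ≤ (u.1.length - w.length) + (v.1.length - w.length) := by
  have hwle : w.length ≤ h := le_trans hu.length_le u.2
  obtain ⟨p, hp⟩ := exists_walk_suffix h u.1.length u ⟨w, hwle⟩ le_rfl hu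
  obtain ⟨q, hq⟩ := exists_walk_suffix h v.1.length v ⟨w, hwle⟩ le_rfl hv
  have := SimpleGraph.dist_le (p.append q.reverse)
  rwa [SimpleGraph.Walk.length_append, SimpleGraph.Walk.length_reverse, hp, hq] at this

lemma ecc_karyTree_le (h : ℕ) (v : KVert 2 h) : ecc (karyTree 2 h) v ≤ v.1.length + h := by
  refine Finset.sup_le fun u _ => ?_
  have := dist_le_common_suffix h u v [] List.nil_suffix List.nil_suffix
  have h2 := u.2
  simp at this
  omega

lemma ball_count (h : ℕ) (v : KVert 2 h) (F : Finset (KVert 2 h)) (r fl s : ℕ)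
    [DecidablePred (fun u : KVert 2 h => u.1.length = fl)]
    (hfl : fl ≤ h) (hs1 : s ≤ fl) (hs2 : s ≤ v.1.length)
    (hd : fl + v.1.length ≤ r + 2 * s)
    (hF : ∀ u : KVert 2 h, u.1.length = fl → (karyTree 2 h).dist u v ≤ r → u ∈ F) :
    2 ^ (fl - s) ≤ (F.filter (fun u => u.1.length = fl)).card := by
  classical
  set w : List (Fin 2) := v.1.drop (v.1.length - s) with hw
  have hwlen : w.length = s := by
    rw [hw, List.length_drop]; omega
  have hwsuf : w <:+ v.1 := List.drop_suffix _ _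
  have key : ∀ g : Fin (fl - s) → Fin 2, (List.ofFn g ++ w).length = fl := by
    intro g
    rw [List.length_append, List.length_ofFn, hwlen]; omega
  set f : (Fin (fl - s) → Fin 2) → KVert 2 h :=
    fun g => ⟨List.ofFn g ++ w, by rw [key]; exact hfl⟩ with hf
  have hinj : ((Finset.univ : Finset (Fin (fl - s) → Fin 2)) : Set (Fin (fl - s) → Fin 2)).InjOn f := by
    intro g1 _ g2 _ hgg
    have : List.ofFn g1 ++ w = List.ofFn g2 ++ w := congrArg Subtype.val hgg
    exact List.ofFn_inj.1 (List.append_cancel_right this)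
  have hmaps : ∀ g ∈ (Finset.univ : Finset (Fin (fl - s) → Fin 2)),
      f g ∈ F.filter (fun u => u.1.length = fl) := by
    intro g _
    refine Finset.mem_filter.2 ⟨hF _ (key g) ?_, key g⟩
    have hdle := dist_le_common_suffix h (f g) v w (List.suffix_append _ _) hwsuf
    have hlen : (f g).1.length = fl := key g
    rw [hlen, hwlen] at hdle
    omega
  calc 2 ^ (fl - s) = (Finset.univ : Finset (Fin (fl - s) → Fin 2)).card := by
        simp [Fintype.card_fun]
    _ ≤ _ := Finset.card_le_card_of_injOn f hmaps hinj

lemma two_level_card (h : ℕ) (F : Finset (KVert 2 h)) (l1 l2 c1 c2 : ℕ)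
    [DecidablePred (fun u : KVert 2 h => u.1.length = l1)]
    [DecidablePred (fun u : KVert 2 h => u.1.length = l2)]
    (hne : l1 ≠ l2)
    (h1 : c1 ≤ (F.filter (fun u => u.1.length = l1)).card)
    (h2 : c2 ≤ (F.filter (fun u => u.1.length = l2)).card) :
    c1 + c2 ≤ F.card := by
  classical
  have hdisj : Disjoint (F.filter (fun u => u.1.length = l1))
      (F.filter (fun u => u.1.length = l2)) := by
    refine Finset.disjoint_left.2 fun u hu1 hu2 => ?_
    have e1 := (Finset.mem_filter.1 hu1).2
    have e2 := (Finset.mem_filter.1 hu2).2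
    exact hne (e1 ▸ e2 ▸ rfl)
  have hsub : F.filter (fun u => u.1.length = l1) ∪ F.filter (fun u => u.1.length = l2) ⊆ F :=
    Finset.union_subset (Finset.filter_subset _ _) (Finset.filter_subset _ _)
  have := Finset.card_le_card hsub
  rw [Finset.card_union_of_disjoint hdisj] at this
  omega

lemma one_level_card (h : ℕ) (F : Finset (KVert 2 h)) (l1 c1 : ℕ)
    [DecidablePred (fun u : KVert 2 h => u.1.length = l1)]
    (h1 : c1 ≤ (F.filter (fun u => u.1.length = l1)).card) :
    c1 ≤ F.card :=
  le_trans h1 (Finset.card_le_card (Finset.filter_subset _ _))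

lemma aux_two_mul_le (k : ℕ) : 2 * k + 8 ≤ 2 ^ (k + 3) := by
  induction k with
  | zero => norm_num
  | succ n ih =>
    have : (2:ℕ) ≤ 2 ^ (n + 3) := by
      calc (2:ℕ) ≤ 2^1 := by norm_num
        _ ≤ 2 ^ (n+3) := Nat.pow_le_pow_right (by norm_num) (by omega)
    rw [pow_succ]
    omega

lemma aux_two_mul_le' (k : ℕ) : 2 * (k + 2) ≤ 2 ^ (k + 2) := by
  induction k with
  | zero => norm_num
  | succ n ih =>
    have : (2:ℕ) ≤ 2 ^ (n + 2) := by
      calc (2:ℕ) ≤ 2^1 := by norm_num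
        _ ≤ 2 ^ (n+2) := Nat.pow_le_pow_right (by norm_num) (by omega)
    rw [show n + 1 + 2 = (n + 2) + 1 by omega, pow_succ]
    omega

end StmtAux

/-- for the perfect binary tree of height `h = 3m + t ≥ 4` (`0 ≤ t ≤ 2`),
the set consisting of all vertices at level `h-1`, all vertices at the levels
`h-2, h-5, …, 1+t`, together with the root if `t ≤ 1` and both vertices at level `1`
if `t = 2`, is a multicover. -/
theorem stmt12 (h m t : ℕ) (hh : 4 ≤ h) (ht : t ≤ 2) (hmt : h = 3 * m + t) :
    IsMulticover (karyTree 2 h)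
      (Finset.univ.filter (fun v : KVert 2 h =>
        v.1.length = h - 1 ∨
        (v.1.length % 3 = (h - 2) % 3 ∧ 1 + t ≤ v.1.length ∧ v.1.length ≤ h - 2) ∨
        (t ≤ 1 ∧ v.1.length = 0) ∨
        (t = 2 ∧ v.1.length = 1))) := by
  classical
  intro v r hr1 hr2
  set G := karyTree 2 h with hG
  set ℓ := v.1.length with hℓ
  have hℓh : ℓ ≤ h := v.2
  have hrecc : r ≤ ℓ + h := le_trans hr2 (by rw [hG]; exact ecc_karyTree_le h v)
  set F := (Finset.univ.filter (fun u : KVert 2 h =>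
        u.1.length = h - 1 ∨
        (u.1.length % 3 = (h - 2) % 3 ∧ 1 + t ≤ u.1.length ∧ u.1.length ≤ h - 2) ∨
        (t ≤ 1 ∧ u.1.length = 0) ∨
        (t = 2 ∧ u.1.length = 1))).filter (fun u => G.dist u v ≤ r) with hFdef
  show r ≤ F.card
  have hmemF : ∀ u : KVert 2 h,
      (u.1.length = h - 1 ∨
        (u.1.length % 3 = (h - 2) % 3 ∧ 1 + t ≤ u.1.length ∧ u.1.length ≤ h - 2) ∨
        (t ≤ 1 ∧ u.1.length = 0) ∨
        (t = 2 ∧ u.1.length = 1)) → G.dist u v ≤ r → u ∈ F := by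
    intro u h1 h2
    exact Finset.mem_filter.2 ⟨Finset.mem_filter.2 ⟨Finset.mem_univ u, h1⟩, h2⟩
  have hpow_succ : ∀ n : ℕ, n + 1 ≤ 2 ^ n := fun n => Nat.lt_two_pow_self (n := n)
  by_cases hI : h - 1 + ℓ ≤ r
  · -- Case I: the whole level h-1 is inside the ball
    have hcount := ball_count h v F r (h - 1) 0 (by omega) (by omega) (by omega)
      (by omega) (fun u hu hd => hmemF u (Or.inl hu) hd)
    have h2h : 2 * h ≤ 2 ^ (h - 1) := by
      have := aux_two_mul_le (h - 4)
      have heq : h - 4 + 3 = h - 1 := by omega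
      rw [heq] at this
      omega
    refine le_trans ?_ (one_level_card h F (h - 1) (2 ^ (h - 1 - 0)) hcount)
    simp only [Nat.sub_zero]
    omega
  · by_cases hII : h ≤ r + ℓ + 1
    · -- Case II: use levels h-1 and h-2
      have hpred2 : ∀ u : KVert 2 h, u.1.length = h - 2 → G.dist u v ≤ r → u ∈ F := by
        intro u hu hd
        exact hmemF u (Or.inr (Or.inl ⟨by rw [hu], by omega, by omega⟩)) hd
      by_cases hr2' : r = 1
      · subst hr2'
        set s1 := (h - 1 + ℓ) / 2 with hs1
        have hcount := ball_count h v F 1 (h - 1) s1 (by omega) (by omega) (by omega)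
          (by omega) (fun u hu hd => hmemF u (Or.inl hu) hd)
        refine le_trans ?_ (one_level_card h F (h - 1) _ hcount)
        exact Nat.one_le_two_pow
      · -- r ≥ 2
        have hr2'' : 2 ≤ r := by omega
        set s1 := (h - 1 + ℓ - r + 1) / 2 with hs1
        set s2 := (h - 2 + ℓ - r + 1) / 2 with hs2
        have hc1 := ball_count h v F r (h - 1) s1 (by omega) (by omega) (by omega)
          (by omega) (fun u hu hd => hmemF u (Or.inl hu) hd)
        have hc2 := ball_count h v F r (h - 2) s2 (by omega) (by omega) (by omega)
          (by omega) hpred2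
        have hcomb := two_level_card h F (h - 1) (h - 2) _ _ (by omega) hc1 hc2
        refine le_trans ?_ hcomb
        have p1 := hpow_succ (h - 1 - s1)
        have p2 := hpow_succ (h - 2 - s2)
        have harith : r ≤ (h - 1 - s1) + (h - 2 - s2) + 2 := by omega
        omega
    · -- Case III: r + ℓ + 2 ≤ h
      have hIII : r + ℓ + 2 ≤ h := by omega
      by_cases hsp : t = 0 ∧ ℓ = 0 ∧ r = 3
      · -- special case: root plus both level-1 vertices
        obtain ⟨ht0, hl0, hr3⟩ := hsp
        have hc0 := ball_count h v F r 0 0 (by omega) (by omega) (by omega)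
          (by omega) (fun u hu hd => hmemF u (Or.inr (Or.inr (Or.inl ⟨by omega, hu⟩))) hd)
        have hc1 := ball_count h v F r 1 0 (by omega) (by omega) (by omega)
          (by omega) (fun u hu hd => hmemF u (Or.inr (Or.inl ⟨by omega, by omega, by omega⟩)) hd)
        have hcomb := two_level_card h F 0 1 _ _ (by omega) hc0 hc1
        refine le_trans ?_ hcomb
        norm_num
        omega
      · by_cases h1t : 1 + t ≤ ℓ + r
        · -- chain level
          set X := ℓ + r with hX
          set lam := X - (X - (1 + t)) % 3 with hlam
          have hm1 : 1 ≤ m := by omega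
          have hlam1 : 1 + t ≤ lam := by omega
          have hlam2 : X - 2 ≤ lam ∧ lam ≤ X := by omega
          have hlammod : lam % 3 = (h - 2) % 3 := by omega
          set s := (lam + ℓ - r + 1) / 2 with hs
          have hc := ball_count h v F r lam s (by omega) (by omega) (by omega)
            (by omega) (fun u hu hd => hmemF u (Or.inr (Or.inl ⟨by rw [hu]; exact hlammod,
              by omega, by omega⟩)) hd)
          refine le_trans ?_ (one_level_card h F lam _ hc)
          -- show r ≤ 2 ^ (lam - s)
          have hdisj : r - 1 ≤ lam - s ∨ (4 ≤ r ∧ r - 2 ≤ lam - s) := by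
            rcases Nat.lt_or_ge (lam + ℓ) r with hcap | hnocap
            · -- s = 0, lam - s = lam ≥ r - 2
              have hs0 : s = 0 := by omega
              rcases Nat.lt_or_ge lam (r - 1) with hl | hl
              · right
                constructor
                · -- lam = r - 2, ℓ = 0; exclude r ≤ 3
                  by_contra hcon
                  push_neg at hcon
                  -- r ≤ 3, lam ≤ r - 2 ≤ 1, 1 + t ≤ lam so t = 0, lam = 1, r = 3, ℓ = 0
                  exact hsp (by omega)
                · omega
              · left; omega
            · left; omega
          rcases hdisj with hd1 | ⟨hd4, hd2⟩
          · calc r ≤ 2 ^ (r - 1) := by have := hpow_succ (r - 1); omega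
              _ ≤ 2 ^ (lam - s) := Nat.pow_le_pow_right (by norm_num) hd1
          · calc r ≤ 2 ^ (r - 2) := by
                  have := aux_two_mul_le' (r - 4)
                  have heq : r - 4 + 2 = r - 2 := by omega
                  rw [heq] at this
                  omega
              _ ≤ 2 ^ (lam - s) := Nat.pow_le_pow_right (by norm_num) hd2
        · -- tiny cases: ℓ + r ≤ t
          have htiny : ℓ + r ≤ t := by omega
          by_cases ht2 : t = 2
          · by_cases hl1 : ℓ = 1
            · -- v at level 1, r = 1, v itself in S
              have hc := ball_count h v F r 1 1 (by omega) (by omega) (by omega)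
                (by omega) (fun u hu hd => hmemF u (Or.inr (Or.inr (Or.inr ⟨ht2, hu⟩))) hd)
              refine le_trans ?_ (one_level_card h F 1 _ hc)
              have : r = 1 := by omega
              simp [this]
            · -- ℓ = 0, r ≤ 2, both level-1 vertices
              have hl0 : ℓ = 0 := by omega
              have hc := ball_count h v F r 1 0 (by omega) (by omega) (by omega)
                (by omega) (fun u hu hd => hmemF u (Or.inr (Or.inr (Or.inr ⟨ht2, hu⟩))) hd)
              refine le_trans ?_ (one_level_card h F 1 _ hc)
              norm_num
              omega
          · -- t ≤ 1, so ℓ = 0, r = 1, t = 1; root in S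
            have hc := ball_count h v F r 0 0 (by omega) (by omega) (by omega)
              (by omega) (fun u hu hd => hmemF u (Or.inr (Or.inr (Or.inl ⟨by omega, hu⟩))) hd)
            refine le_trans ?_ (one_level_card h F 0 _ hc)
            norm_num
            omega
end

section
/- Let T_h be a perfect binary tree of height h = 3m + t ≥ 4 with 0 ≤ t ≤ 2. Then P_b(T_h) = M_c(T_h) = 2^{t+1} · (8^m − 1)/7 + 2^{h−1} + b_t, where b_0 = 1, b_1 = 1, and b_2 = 2. -/
variable {V : Type*}

namespace S13
variable {k h : ℕ}

noncomputable def cidx (x y : List (Fin k)) : ℕ :=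
  Nat.find (⟨x.length, by simp⟩ : ∃ i, x.drop i <:+ y)
noncomputable def csuf (x y : List (Fin k)) : ℕ := x.length - cidx x y
lemma cidx_spec (x y : List (Fin k)) : x.drop (cidx x y) <:+ y :=
  Nat.find_spec (⟨x.length, by simp⟩ : ∃ i, x.drop i <:+ y)
lemma cidx_le (x y : List (Fin k)) : cidx x y ≤ x.length := Nat.find_le (by simp)
lemma csuf_le_left (x y : List (Fin k)) : csuf x y ≤ x.length := Nat.sub_le _ _
lemma csuf_le_right (x y : List (Fin k)) : csuf x y ≤ y.length := by
  have := (cidx_spec x y).length_le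
  have h2 := cidx_le x y
  rw [List.length_drop] at this
  simp [csuf]; omega
lemma le_csuf {x y s : List (Fin k)} (hsx : s <:+ x) (hsy : s <:+ y) :
    s.length ≤ csuf x y := by
  have hd : x.drop (x.length - s.length) = s := (List.suffix_iff_eq_drop.1 hsx).symm
  have : cidx x y ≤ x.length - s.length := Nat.find_le (by rw [hd]; exact hsy)
  have hls := hsx.length_le
  simp [csuf]; omega
lemma csuf_self (x : List (Fin k)) : csuf x x = x.length := by
  have : cidx x x = 0 := Nat.eq_zero_of_le_zero (Nat.find_le (by simp))
  simp [csuf, this]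
lemma csuf_drop_suffix (x y : List (Fin k)) :
    x.drop (x.length - csuf x y) <:+ y := by
  have : x.length - csuf x y = cidx x y := by
    have := cidx_le x y; simp [csuf]; omega
  rw [this]; exact cidx_spec x y

def root (k h : ℕ) : KVert k h := ⟨[], by simp⟩

/-- walk down to a suffix -/
lemma exists_walk_suffix (l : List (Fin k)) (hl : l.length ≤ h) (s : List (Fin k))
    (hs : s <:+ l) :
    ∃ w : (karyTree k h).Walk ⟨l, hl⟩ ⟨s, hs.length_le.trans hl⟩,
      w.length = l.length - s.length := by
  induction l with
  | nil =>
    obtain rfl : s = [] := List.suffix_nil.1 hs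
    exact ⟨.nil, by simp⟩
  | cons a l' ih =>
    rcases List.suffix_cons_iff.1 hs with hcase | hs'
    · refine ⟨SimpleGraph.Walk.nil.copy rfl (Subtype.ext hcase.symm), ?_⟩
      rw [SimpleGraph.Walk.length_copy, hcase]
      simp
    · have hl' : l'.length ≤ h := by simp at hl; omega
      obtain ⟨w, hw⟩ := ih hl' hs'
      refine ⟨.cons (show (karyTree k h).Adj _ _ from Or.inl ⟨a, rfl⟩) w, ?_⟩
      have := hs'.length_le
      simp [hw]; omega

lemma dist_le_cs (x y : KVert k h) (s : List (Fin k)) (hsx : s <:+ x.1) (hsy : s <:+ y.1) :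
    (karyTree k h).dist x y ≤ (x.1.length - s.length) + (y.1.length - s.length) := by
  obtain ⟨w1, hw1⟩ := exists_walk_suffix x.1 x.2 s hsx
  obtain ⟨w2, hw2⟩ := exists_walk_suffix y.1 y.2 s hsy
  calc (karyTree k h).dist x y ≤ (w1.append w2.reverse).length :=
        SimpleGraph.dist_le _
    _ = _ := by
        rw [SimpleGraph.Walk.length_append, SimpleGraph.Walk.length_reverse]
        omega

lemma connected : (karyTree k h).Connected := by
  rw [SimpleGraph.connected_iff]
  refine ⟨fun x y => ?_, ⟨⟨[], by simp⟩⟩⟩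
  have hx := exists_walk_suffix (k := k) x.1 x.2 [] List.nil_suffix
  have hy := exists_walk_suffix (k := k) y.1 y.2 [] List.nil_suffix
  obtain ⟨w1, -⟩ := hx; obtain ⟨w2, -⟩ := hy
  exact ⟨w1.append w2.reverse⟩

lemma walk_lower {x y : KVert k h} (w : (karyTree k h).Walk x y) :
    x.1.length + y.1.length ≤ w.length + 2 * csuf x.1 y.1 := by
  induction w with
  | nil => rw [csuf_self]; omega
  | @cons x x' y hadj w ih =>
    rcases hadj with ⟨a, hx⟩ | ⟨a, hx'⟩
    · -- x.1 = a :: x'.1 : csuf x y ≥ csuf x' y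
      have hs : x'.1.drop (x'.1.length - csuf x'.1 y.1) <:+ x.1 := by
        rw [hx]
        exact (List.drop_suffix _ _).trans (List.suffix_cons a x'.1)
      have hsy := csuf_drop_suffix x'.1 y.1
      have hle := le_csuf hs hsy
      rw [List.length_drop] at hle
      have h1 : x.1.length = x'.1.length + 1 := by rw [hx]; simp
      have h2 := csuf_le_left x'.1 y.1
      show x.1.length + y.1.length ≤ w.length + 1 + 2 * csuf x.1 y.1
      omega
    · -- x'.1 = a :: x.1 : csuf x' y ≤ csuf x y + 1
      have key : csuf x'.1 y.1 ≤ csuf x.1 y.1 + 1 := by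
        have hs := List.drop_suffix (x'.1.length - csuf x'.1 y.1) x'.1
        have hsy := csuf_drop_suffix x'.1 y.1
        set s := x'.1.drop (x'.1.length - csuf x'.1 y.1) with hsdef
        have hlens : s.length = csuf x'.1 y.1 := by
          rw [hsdef, List.length_drop]
          have := csuf_le_left x'.1 y.1; omega
        rw [hx'] at hs
        rcases List.suffix_cons_iff.1 hs with hcase | hcase
        · -- s = a :: x.1
          have : x.1 <:+ y.1 := ((List.suffix_cons a x.1).trans (hcase ▸ hsy : _))
          have h2 := le_csuf (List.suffix_refl x.1) this
          have : s.length = x.1.length + 1 := by rw [hcase]; simp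
          omega
        · have := le_csuf hcase hsy
          omega
      have h1 : x'.1.length = x.1.length + 1 := by rw [hx']; simp
      show x.1.length + y.1.length ≤ w.length + 1 + 2 * csuf x.1 y.1
      omega

lemma dist_add_csuf (x y : KVert k h) :
    (karyTree k h).dist x y + 2 * csuf x.1 y.1 = x.1.length + y.1.length := by
  have hub : (karyTree k h).dist x y + 2 * csuf x.1 y.1 ≤ x.1.length + y.1.length := by
    set s := x.1.drop (x.1.length - csuf x.1 y.1) with hsdef
    have hsx : s <:+ x.1 := List.drop_suffix _ _
    have hsy : s <:+ y.1 := csuf_drop_suffix x.1 y.1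
    have hlens : s.length = csuf x.1 y.1 := by
      rw [hsdef, List.length_drop]
      have := csuf_le_left x.1 y.1; omega
    have := dist_le_cs x y s hsx hsy
    have h1 := csuf_le_left x.1 y.1
    have h2 := csuf_le_right x.1 y.1
    omega
  have hlb : x.1.length + y.1.length ≤ (karyTree k h).dist x y + 2 * csuf x.1 y.1 := by
    obtain ⟨w, hw⟩ := (connected x y).exists_walk_length_eq_dist
    have := walk_lower w
    omega
  omega

lemma dist_le_sum (x y : KVert k h) :
    (karyTree k h).dist x y ≤ x.1.length + y.1.length := by
  have := dist_add_csuf x y; omega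

lemma ecc_le (v : KVert k h) : ecc (karyTree k h) v ≤ h + v.1.length :=
  Finset.sup_le fun u _ => (dist_le_sum u v).trans (by have := u.2; omega)

lemma ecc_ge_dist (u v : KVert k h) :
    (karyTree k h).dist u v ≤ ecc (karyTree k h) v :=
  Finset.le_sup (f := fun w => (karyTree k h).dist w v) (Finset.mem_univ _)

lemma ecc_ge_len (v : KVert k h) : v.1.length ≤ ecc (karyTree k h) v := by
  have hroot := dist_add_csuf (root k h) v
  have hc : csuf ((root k h).1) v.1 = 0 :=
    Nat.le_zero.1 (csuf_le_left _ _)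
  have hle := ecc_ge_dist (root k h) v
  have hr0 : (root k h).1.length = 0 := rfl
  rw [hc, hr0] at hroot
  omega

lemma ecc_root_ge [NeZero k] : h ≤ ecc (karyTree k h) (root k h) := by
  have hval : (List.replicate h (0 : Fin k)).length ≤ h := by simp
  set u : KVert k h := ⟨List.replicate h 0, hval⟩ with hu
  have hc : csuf u.1 ((root k h).1) = 0 :=
    Nat.le_zero.1 (csuf_le_right _ _)
  have hd := dist_add_csuf u (root k h)
  rw [hc] at hd
  have hlen : u.1.length = h := by rw [hu]; simp
  have hle := ecc_ge_dist u (root k h)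
  have hr0 : (root k h).1.length = 0 := rfl
  rw [hr0] at hd
  omega

end S13

namespace S13
open scoped Classical

variable {k h : ℕ}

/-- vertices at level `n` having `σ` as suffix -/
noncomputable def lvlS (k h n : ℕ) (σ : List (Fin k)) : Finset (KVert k h) :=
  Finset.univ.filter (fun u => u.1.length = n ∧ σ <:+ u.1)

lemma mem_lvlS {n : ℕ} {σ : List (Fin k)} {u : KVert k h} :
    u ∈ lvlS k h n σ ↔ u.1.length = n ∧ σ <:+ u.1 := by
  simp [lvlS]

lemma card_lvlS (d : ℕ) : ∀ (n : ℕ) (σ : List (Fin k)), σ.length + d = n → n ≤ h →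
    (lvlS k h n σ).card = k ^ d := by
  induction d with
  | zero =>
    intro n σ hlen hn
    have : lvlS k h n σ = {⟨σ, by omega⟩} := by
      ext u
      rw [mem_lvlS, Finset.mem_singleton]
      constructor
      · rintro ⟨h1, h2⟩
        exact Subtype.ext (h2.eq_of_length (by omega)).symm
      · rintro rfl
        exact ⟨by simp; omega, List.suffix_refl _⟩
    rw [this]; simp
  | succ d ih =>
    intro n σ hlen hn
    have hstep : lvlS k h n σ = Finset.univ.biUnion (fun a : Fin k => lvlS k h n (a :: σ)) := by
      ext u
      simp only [Finset.mem_biUnion, Finset.mem_univ, true_and, mem_lvlS]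
      constructor
      · rintro ⟨h1, h2⟩
        have hsu : u.1.drop (n - σ.length - 1) <:+ u.1 := List.drop_suffix _ _
        have hlens' : (u.1.drop (n - σ.length - 1)).length = σ.length + 1 := by
          rw [List.length_drop, h1]; omega
        have hss0 : σ <:+ u.1.drop (n - σ.length - 1) :=
          List.suffix_of_suffix_length_le h2 hsu (by rw [hlens']; omega)
        obtain ⟨a, s'', hcons⟩ : ∃ a s'', u.1.drop (n - σ.length - 1) = a :: s'' := by
          rcases hcase : u.1.drop (n - σ.length - 1) with _ | ⟨a, s''⟩
          · rw [hcase] at hlens'; simp at hlens'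
          · exact ⟨a, s'', rfl⟩
        rw [hcons] at hsu hlens' hss0
        simp only [List.length_cons] at hlens'
        rcases List.suffix_cons_iff.1 hss0 with hc | hc
        · exfalso; have := congrArg List.length hc; simp at this; omega
        · have hσ : σ = s'' := hc.eq_of_length (by omega)
          exact ⟨a, h1, by rw [hσ]; exact hsu⟩
      · rintro ⟨a, h1, h2⟩
        exact ⟨h1, ((List.suffix_cons a σ).trans h2)⟩
    rw [hstep, Finset.card_biUnion]
    · have : ∀ a : Fin k, (lvlS k h n (a :: σ)).card = k ^ d := fun a =>
        ih n (a :: σ) (by simp; omega) hn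
      simp [this]
      ring
    · intro a _ b _ hab
      rw [Function.onFun, Finset.disjoint_left]
      intro u hua hub
      rw [mem_lvlS] at hua hub
      have hle' : (a :: σ) <:+ (b :: σ) :=
        List.suffix_of_suffix_length_le hua.2 hub.2 (by simp)
      have := hle'.eq_of_length (by simp)
      simp at this
      exact hab this

end S13


namespace S13
open scoped Classical

variable {h m t : ℕ}

lemma dist_root (k h : ℕ) (v : KVert k h) :
    (karyTree k h).dist (root k h) v = v.1.length := by
  have hd := dist_add_csuf (root k h) v
  have hc : csuf ((root k h)).1 v.1 = 0 := Nat.le_zero.1 (csuf_le_left _ _)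
  have hr0 : (root k h).1.length = 0 := rfl
  rw [hc, hr0] at hd
  omega

/-- arithmetic helpers -/
lemma aux_two_mul (n : ℕ) (hn : 4 ≤ n) : 2 * n ≤ 2 ^ (n - 1) := by
  induction n with
  | zero => omega
  | succ p ih =>
    rcases Nat.lt_or_ge p 4 with hp | hp
    · interval_cases p <;> simp_all <;> omega
    · have := ih (by omega)
      have h2 : 2 ^ (p - 1) * 2 = 2 ^ p := by
        rw [← pow_succ]; congr 1; omega
      have : p + 1 - 1 = p := by omega
      rw [this]
      omega

lemma pow_half (D : ℕ) : ∀ a, 1 ≤ a → a + D ≤ 2 ^ (a + D / 2) := by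
  induction D using Nat.strong_induction_on with
  | _ D ih =>
    intro a ha
    rcases Nat.lt_or_ge D 2 with hD | hD
    · have h1 : a < 2 ^ a := Nat.lt_two_pow_self (n := a)
      have h2 : a + D / 2 = a := by omega
      rw [h2]
      omega
    · rcases Nat.lt_or_ge (a + D) 4 with hs | hs
      · have ha1 : a = 1 := by omega
        have hD2 : D = 2 := by omega
        subst ha1 hD2; norm_num
      · have := ih (D - 2) (by omega) a ha
        have hexp : a + D / 2 = (a + (D - 2) / 2) + 1 := by omega
        rw [hexp, pow_succ]
        omega

lemma caseA (x : ℕ) (hx : 2 ≤ x) : x ≤ 2 ^ ((x - 1) / 2) + 2 ^ ((x - 2) / 2) := by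
  induction x using Nat.strong_induction_on with
  | _ x ih =>
    rcases Nat.lt_or_ge x 4 with hx4 | hx4
    · interval_cases x <;> norm_num
    · have hih := ih (x - 2) (by omega) (by omega)
      have he1 : (x - 1) / 2 = (x - 2 - 1) / 2 + 1 := by omega
      have he2 : (x - 2) / 2 = (x - 2 - 2) / 2 + 1 := by omega
      rw [he1, he2, pow_succ, pow_succ]
      omega

lemma caseA3 (x : ℕ) (hx : 3 ≤ x) : x ≤ 2 ^ (x - 2) + 1 := by
  induction x using Nat.strong_induction_on with
  | _ x ih =>
    rcases Nat.lt_or_ge x 4 with hx4 | hx4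
    · interval_cases x <;> norm_num
    · have hih := ih (x - 1) (by omega) (by omega)
      have he : x - 2 = (x - 1 - 2) + 1 := by omega
      rw [he, pow_succ]
      omega

/-- S-levels -/
def Qlev (h t n : ℕ) : Prop :=
  n = 0 ∨ n = h - 1 ∨ (t + 1 ≤ n ∧ n ≤ h - 2 ∧ n % 3 = (t + 1) % 3)

/-- the multicover set -/
noncomputable def SS (h t : ℕ) : Finset (KVert 2 h) :=
  Finset.univ.filter (fun u => Qlev h t u.1.length ∨ (t = 2 ∧ u.1 = [0]))

lemma mem_SS {u : KVert 2 h} :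
    u ∈ SS h t ↔ Qlev h t u.1.length ∨ (t = 2 ∧ u.1 = [0]) := by
  simp [SS]

lemma subset_ball (v : KVert 2 h) (r n c : ℕ) (hcn : c ≤ n) (hnh : n ≤ h)
    (hcl : c ≤ v.1.length) (hd : n - c + (v.1.length - c) ≤ r)
    (hq : Qlev h t n) :
    lvlS 2 h n (v.1.drop (v.1.length - c)) ⊆
      (SS h t).filter (fun u => (karyTree 2 h).dist u v ≤ r) := by
  intro u hu
  rw [mem_lvlS] at hu
  have hσlen : (v.1.drop (v.1.length - c)).length = c := by
    rw [List.length_drop]; omega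
  have hdist := dist_le_cs u v _ hu.2 (List.drop_suffix _ _)
  rw [hσlen, hu.1] at hdist
  rw [Finset.mem_filter]
  exact ⟨mem_SS.2 (Or.inl (hu.1 ▸ hq)), hdist.trans hd⟩

lemma card_ball (v : KVert 2 h) (n c : ℕ) (hcn : c ≤ n) (hnh : n ≤ h)
    (hcl : c ≤ v.1.length) :
    (lvlS 2 h n (v.1.drop (v.1.length - c))).card = 2 ^ (n - c) := by
  apply card_lvlS
  · rw [List.length_drop]; omega
  · exact hnh

theorem SS_multicover (hh : 4 ≤ h) (ht : t ≤ 2) (hmt : h = 3 * m + t) :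
    IsMulticover (karyTree 2 h) (SS h t) := by
  intro v r hr1 hr2
  have hℓh : v.1.length ≤ h := v.2
  have hrecc : r ≤ h + v.1.length := hr2.trans (ecc_le v)
  have hm1 : 1 ≤ m := by omega
  by_cases hc1 : v.1.length + 1 ≤ h - 1 ∧ h - 1 - v.1.length ≤ r
  · -- Case 1 : level h-1 alone
    obtain ⟨hℓ2, hrge⟩ := hc1
    obtain ⟨c, hceq⟩ : ∃ c, c = (h + v.1.length - r) / 2 := ⟨_, rfl⟩
    have hcl : c ≤ v.1.length := by omega
    have hcn : c ≤ h - 1 := by omega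
    have hd : h - 1 - c + (v.1.length - c) ≤ r := by omega
    have hq : Qlev h t (h - 1) := Or.inr (Or.inl rfl)
    have hsub := subset_ball (t := t) v r (h - 1) c hcn (by omega) hcl hd hq
    have hcard := card_ball v (h - 1) c hcn (by omega) hcl
    have harith : r ≤ 2 ^ (h - 1 - c) := by
      rcases Nat.lt_or_ge (h + v.1.length) (r + 2) with hbig | hsmall
      · have h2h := aux_two_mul h hh
        have hpow : 2 ^ (h - 1) ≤ 2 ^ (h - 1 - c) :=
          Nat.pow_le_pow_right (by norm_num) (by omega)
        omega
      · have hph := pow_half (r - (h - 1 - v.1.length)) (h - 1 - v.1.length) (by omega)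
        have hexp : h - 1 - c = (h - 1 - v.1.length) + (r - (h - 1 - v.1.length)) / 2 := by
          omega
        rw [hexp]
        omega
    have hle := Finset.card_le_card hsub
    omega
  · by_cases hc2 : h - 1 ≤ v.1.length
    · -- Case 2 : levels h-1 and h-2
      have hq1 : Qlev h t (h - 1) := Or.inr (Or.inl rfl)
      have hq2 : Qlev h t (h - 2) := Or.inr (Or.inr ⟨by omega, by omega, by omega⟩)
      obtain ⟨c1, hc1eq⟩ : ∃ c, c = (h + v.1.length - r) / 2 := ⟨_, rfl⟩
      have hc1l : c1 ≤ v.1.length := by omega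
      have hc1n : c1 ≤ h - 1 := by omega
      have hd1 : h - 1 - c1 + (v.1.length - c1) ≤ r := by omega
      have hsub1 := subset_ball (t := t) v r (h - 1) c1 hc1n (by omega) hc1l hd1 hq1
      have hcard1 := card_ball v (h - 1) c1 hc1n (by omega) hc1l
      rcases Nat.lt_or_ge r 2 with hr2' | hr2'
      · -- r = 1
        have hone : (1:ℕ) ≤ 2 ^ (h - 1 - c1) := Nat.one_le_two_pow
        have hle := Finset.card_le_card hsub1
        omega
      · obtain ⟨c2, hc2eq⟩ : ∃ c, c = (h + v.1.length - 1 - r) / 2 := ⟨_, rfl⟩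
        have hc2l : c2 ≤ v.1.length := by omega
        have hc2n : c2 ≤ h - 2 := by omega
        have hd2 : h - 2 - c2 + (v.1.length - c2) ≤ r := by omega
        have hsub2 := subset_ball (t := t) v r (h - 2) c2 hc2n (by omega) hc2l hd2 hq2
        have hcard2 := card_ball v (h - 2) c2 hc2n (by omega) hc2l
        have hdisj : Disjoint (lvlS 2 h (h-1) (v.1.drop (v.1.length - c1)))
            (lvlS 2 h (h-2) (v.1.drop (v.1.length - c2))) := by
          rw [Finset.disjoint_left]
          intro u hu1 hu2
          rw [mem_lvlS] at hu1 hu2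
          omega
        have hsub : (lvlS 2 h (h-1) (v.1.drop (v.1.length - c1)))
            ∪ (lvlS 2 h (h-2) (v.1.drop (v.1.length - c2)))
            ⊆ (SS h t).filter (fun u => (karyTree 2 h).dist u v ≤ r) :=
          Finset.union_subset hsub1 hsub2
        have hcardu := Finset.card_union_of_disjoint hdisj
        have harith : r ≤ 2 ^ (h - 1 - c1) + 2 ^ (h - 2 - c2) := by
          rcases Nat.lt_or_ge (h + v.1.length) (r + 3) with hbig | hsmall
          · -- capped regime : r ≥ h + ℓ - 2
            have h2h := aux_two_mul h hh
            have hp1 := Nat.pow_le_pow_right (by norm_num : 1 ≤ 2)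
              (by omega : h - 2 ≤ h - 1 - c1)
            have hp2 := Nat.pow_le_pow_right (by norm_num : 1 ≤ 2)
              (by omega : h - 2 ≤ h - 2 - c2)
            have hdb : (2:ℕ) ^ (h - 1) = 2 ^ (h - 2) * 2 := by
              rw [← pow_succ]
              congr 1
              omega
            omega
          ·
           rcases Nat.lt_or_ge v.1.length h with hl' | hl'
           · -- v.1.length = h - 1
            have hA := caseA (r + 1) (by omega)
            have hp1 := Nat.pow_le_pow_right (by norm_num : 1 ≤ 2)
              (by omega : (r + 1 - 1) / 2 ≤ h - 1 - c1)
            have hp2 := Nat.pow_le_pow_right (by norm_num : 1 ≤ 2)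
              (by omega : (r + 1 - 2) / 2 ≤ h - 2 - c2)
            omega
           · -- v.1.length = h
            have hA := caseA r (by omega)
            have hp1 := Nat.pow_le_pow_right (by norm_num : 1 ≤ 2)
              (by omega : (r - 1) / 2 ≤ h - 1 - c1)
            have hp2 := Nat.pow_le_pow_right (by norm_num : 1 ≤ 2)
              (by omega : (r - 2) / 2 ≤ h - 2 - c2)
            omega
        have hle := Finset.card_le_card hsub
        omega
    · -- levels below : v.1.length + r ≤ h - 2
      have hℓr : v.1.length + r ≤ h - 2 := by omega
      rcases Nat.lt_or_ge (v.1.length + r) (t + 1) with h3a | h3b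
      · -- Case 3a : only extras
        have hroot_mem : (root 2 h) ∈
            (SS h t).filter (fun u => (karyTree 2 h).dist u v ≤ r) := by
          rw [Finset.mem_filter]
          refine ⟨mem_SS.2 (Or.inl (Or.inl rfl)), ?_⟩
          rw [dist_root]
          omega
        rcases Nat.lt_or_ge r 2 with hr' | hr'
        · have : 0 < ((SS h t).filter (fun u => (karyTree 2 h).dist u v ≤ r)).card :=
            Finset.card_pos.2 ⟨_, hroot_mem⟩
          omega
        · -- r = 2, level 0, t = 2
          have ht2 : t = 2 := by omega
          have hl0 : v.1.length = 0 := by omega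
          obtain ⟨w, hw⟩ : ∃ w : KVert 2 h, w.1 = [0] := ⟨⟨[0], by simp; omega⟩, rfl⟩
          have hwlen : w.1.length = 1 := by rw [hw]; rfl
          have hv01 : w ∈ (SS h t).filter (fun u => (karyTree 2 h).dist u v ≤ r) := by
            rw [Finset.mem_filter]
            refine ⟨mem_SS.2 (Or.inr ⟨ht2, hw⟩), ?_⟩
            have hds := dist_le_sum w v
            omega
          have hne : w ≠ root 2 h := by
            intro hcon
            have hcl := hwlen
            rw [hcon] at hcl
            simp [root] at hcl
          have : 2 ≤ ((SS h t).filter (fun u => (karyTree 2 h).dist u v ≤ r)).card :=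
            Finset.one_lt_card.2 ⟨_, hv01, _, hroot_mem, hne⟩
          omega
      · -- Case 3b/3c
        obtain ⟨lam, hlameq⟩ :
            ∃ lam, lam = (v.1.length + r) - ((v.1.length + r) - (t + 1)) % 3 := ⟨_, rfl⟩
        have hlam_mod : lam % 3 = (t + 1) % 3 := by omega
        have hlam_ge : t + 1 ≤ lam := by omega
        have hlam_le : lam ≤ v.1.length + r := by omega
        have hlam_ge2 : v.1.length + r ≤ lam + 2 := by omega
        have hq : Qlev h t lam := Or.inr (Or.inr ⟨hlam_ge, by omega, hlam_mod⟩)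
        rcases Nat.lt_or_ge lam (r - 1) with h3c | h3b2
        · -- Case 3c : level 0, lam = r - 2
          have hℓ0 : v.1.length = 0 := by omega
          have hlam_eq : lam = r - 2 := by omega
          have hr3 : 3 ≤ r := by omega
          have hsub := subset_ball (t := t) v r lam 0 (by omega) (by omega) (by omega)
            (by omega) hq
          have hcard := card_ball v lam 0 (by omega) (by omega) (by omega)
          have hroot_mem : (root 2 h) ∈
              (SS h t).filter (fun u => (karyTree 2 h).dist u v ≤ r) := by
            rw [Finset.mem_filter]
            refine ⟨mem_SS.2 (Or.inl (Or.inl rfl)), ?_⟩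
            rw [dist_root]
            omega
          have hdisj : Disjoint (lvlS 2 h lam (v.1.drop (v.1.length - 0))) {root 2 h} := by
            rw [Finset.disjoint_right]
            intro u hu hu2
            rw [Finset.mem_singleton] at hu
            rw [mem_lvlS] at hu2
            rw [hu] at hu2
            have : (root 2 h).1.length = 0 := rfl
            omega
          have hsub' : (lvlS 2 h lam (v.1.drop (v.1.length - 0))) ∪ {root 2 h}
              ⊆ (SS h t).filter (fun u => (karyTree 2 h).dist u v ≤ r) := by
            apply Finset.union_subset hsub
            simpa using hroot_mem
          have hcardu := Finset.card_union_of_disjoint hdisj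
          have hsing : ({root 2 h} : Finset (KVert 2 h)).card = 1 := Finset.card_singleton _
          have harith := caseA3 r hr3
          have hpow : (2:ℕ) ^ (lam - 0) = 2 ^ (r - 2) := by
            rw [Nat.sub_zero, hlam_eq]
          have hle := Finset.card_le_card hsub'
          rw [hcardu, hcard, hsing, hpow] at hle
          omega
        · -- Case 3b
          obtain ⟨c, hceq⟩ : ∃ c, c = min v.1.length (lam - (r - 1)) := ⟨_, rfl⟩
          have hcl : c ≤ v.1.length := by omega
          have hd : lam - c + (v.1.length - c) ≤ r := by omega
          have hsub := subset_ball (t := t) v r lam c (by omega) (by omega) hcl hd hq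
          have hcard := card_ball v lam c (by omega) (by omega) hcl
          have harith : r ≤ 2 ^ (lam - c) := by
            have hmono := Nat.pow_le_pow_right (by norm_num : 1 ≤ 2)
              (by omega : r - 1 ≤ lam - c)
            have := Nat.lt_two_pow_self (n := r - 1)
            omega
          have hle := Finset.card_le_card hsub
          omega

end S13

namespace S13
open scoped Classical

variable {h m t : ℕ}

lemma sumProg (a : ℕ) : ∀ (M : ℕ),
    (∑ n ∈ Finset.range M, if (a ≤ n ∧ n % 3 = a % 3) then (2:ℕ)^n else 0)
      = ∑ i ∈ Finset.range ((M + 2 - a) / 3), 2^(a + 3*i) := by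
  intro M
  induction M with
  | zero =>
    rw [Finset.range_zero, Finset.sum_empty]
    have : (0 + 2 - a) / 3 = 0 := by omega
    rw [this, Finset.range_zero, Finset.sum_empty]
  | succ M ih =>
    rw [Finset.sum_range_succ, ih]
    by_cases hc : a ≤ M ∧ M % 3 = a % 3
    · have hcount : (M + 1 + 2 - a)/3 = (M + 2 - a)/3 + 1 := by omega
      rw [if_pos hc, hcount, Finset.sum_range_succ]
      have hexp : a + 3 * ((M + 2 - a)/3) = M := by omega
      rw [hexp]
    · have hcount : (M + 1 + 2 - a)/3 = (M + 2 - a)/3 := by omega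
      rw [if_neg hc, hcount, add_zero]

lemma geom8 (m : ℕ) : 7 * (∑ i ∈ Finset.range m, (8:ℕ)^i) = 8^m - 1 := by
  induction m with
  | zero => simp
  | succ m ih =>
    rw [Finset.sum_range_succ]
    have h8 : (8:ℕ)^(m+1) = 8 * 8^m := by rw [pow_succ]; ring
    have hpos : 1 ≤ (8:ℕ)^m := Nat.one_le_two_pow.trans (Nat.pow_le_pow_left (by norm_num) m)
    omega

lemma geom_div (a m : ℕ) :
    (∑ i ∈ Finset.range m, (2:ℕ)^(a + 3*i)) = 2^a * ((8^m - 1)/7) := by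
  have h1 : ∀ i, (2:ℕ)^(a + 3*i) = 2^a * 8^i := by
    intro i
    rw [pow_add, pow_mul]
    norm_num
  rw [Finset.sum_congr rfl (fun i _ => h1 i), ← Finset.mul_sum]
  congr 1
  have := geom8 m
  omega

lemma card_level (n : ℕ) (hn : n ≤ h) :
    (Finset.univ.filter (fun u : KVert 2 h => u.1.length = n)).card = 2^n := by
  have : Finset.univ.filter (fun u : KVert 2 h => u.1.length = n) = lvlS 2 h n [] := by
    ext u
    simp [mem_lvlS, lvlS]
  rw [this]
  exact card_lvlS n n [] (by simp) hn

lemma card_filter_len (P : ℕ → Prop) :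
    (Finset.univ.filter (fun u : KVert 2 h => P u.1.length)).card
      = ∑ n ∈ Finset.range (h+1), if P n then (2:ℕ)^n else 0 := by
  rw [Finset.card_eq_sum_card_fiberwise
    (f := fun u : KVert 2 h => u.1.length) (t := Finset.range (h+1))
    (fun u _ => Finset.mem_range.2 (Nat.lt_succ_of_le u.2))]
  apply Finset.sum_congr rfl
  intro n hn
  rw [Finset.mem_range] at hn
  by_cases hP : P n
  · have hcl := card_level (h := h) n (by omega)
    rw [if_pos hP, ← hcl]
    congr 1
    ext u
    simp only [Finset.mem_filter, Finset.mem_univ, true_and]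
    constructor
    · rintro ⟨h1, h2⟩; exact h2
    · rintro h2; exact ⟨h2 ▸ hP, h2⟩
  · rw [if_neg hP]
    apply Finset.card_eq_zero.2
    apply Finset.eq_empty_iff_forall_notMem.2
    intro u hu
    simp only [Finset.mem_filter, Finset.mem_univ, true_and] at hu
    exact hP (hu.2 ▸ hu.1)

lemma card_level_take (n j : ℕ) (π : List (Fin 2)) (hπ : π.length = j) (hjn : j ≤ n)
    (hnh : n ≤ h) :
    (Finset.univ.filter (fun u : KVert 2 h => u.1.length = n ∧ u.1.take j = π)).card
      = 2 ^ (n - j) := by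
  rw [← card_lvlS (n - j) n π.reverse (by simp [hπ]; omega) hnh]
  refine Finset.card_bij'
    (fun u _ => (⟨u.1.reverse, by rw [List.length_reverse]; exact u.2⟩ : KVert 2 h))
    (fun u _ => (⟨u.1.reverse, by rw [List.length_reverse]; exact u.2⟩ : KVert 2 h))
    ?_ ?_ ?_ ?_
  · intro u hu
    rw [Finset.mem_filter] at hu
    obtain ⟨-, h1, h2⟩ := hu
    rw [mem_lvlS]
    refine ⟨by simp [h1], ?_⟩
    have hpre : π <+: u.1 := by
      rw [List.prefix_iff_eq_take, hπ]
      exact h2.symm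
    exact List.reverse_suffix.2 hpre
  · intro u hu
    rw [mem_lvlS] at hu
    obtain ⟨h1, h2⟩ := hu
    rw [Finset.mem_filter]
    have hpre : π <+: u.1.reverse := by
      apply List.reverse_suffix.1
      rw [List.reverse_reverse]
      exact h2
    refine ⟨Finset.mem_univ _, by simp [h1], ?_⟩
    rw [← hπ]
    exact (List.prefix_iff_eq_take.1 hpre).symm
  · intro u hu
    exact Subtype.ext (by simp)
  · intro u hu
    exact Subtype.ext (by simp)

end S13

namespace S13
open scoped Classical

variable {h m t : ℕ}

lemma SS_card (hh : 4 ≤ h) (ht : t ≤ 2) (hmt : h = 3*m+t) :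
    (SS h t).card = 2^(t+1) * ((8^m - 1)/7) + 2^(h-1) + (if t = 2 then 2 else 1) := by
  have hsplitSS : SS h t = (Finset.univ.filter (fun u : KVert 2 h => Qlev h t u.1.length))
      ∪ (Finset.univ.filter (fun u : KVert 2 h => t = 2 ∧ u.1 = [0])) := by
    rw [SS, Finset.filter_or]
  have hdisj : Disjoint (Finset.univ.filter (fun u : KVert 2 h => Qlev h t u.1.length))
      (Finset.univ.filter (fun u : KVert 2 h => t = 2 ∧ u.1 = [0])) := by
    rw [Finset.disjoint_left]
    intro u hu1 hu2
    simp only [Finset.mem_filter, Finset.mem_univ, true_and] at hu1 hu2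
    obtain ⟨ht2, h01⟩ := hu2
    have hlen : u.1.length = 1 := by rw [h01]; rfl
    rcases hu1 with h|h|h
    · omega
    · omega
    · omega
  have hextra : (Finset.univ.filter (fun u : KVert 2 h => t = 2 ∧ u.1 = [0])).card
      = (if t = 2 then 1 else 0) := by
    by_cases ht2 : t = 2
    · rw [if_pos ht2, Finset.card_eq_one]
      refine ⟨⟨[0], by simp; omega⟩, ?_⟩
      ext u
      simp only [Finset.mem_filter, Finset.mem_univ, true_and, Finset.mem_singleton,
        Subtype.ext_iff]
      constructor
      · rintro ⟨-, h2⟩; exact h2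
      · rintro h2; exact ⟨ht2, h2⟩
    · rw [if_neg ht2, Finset.card_eq_zero]
      apply Finset.eq_empty_iff_forall_notMem.2
      intro u hu
      simp only [Finset.mem_filter] at hu
      exact ht2 hu.2.1
  have hQ := card_filter_len (h := h) (Qlev h t)
  have hsplit : ∀ n ∈ Finset.range (h+1), (if Qlev h t n then (2:ℕ)^n else 0) =
      (if n = 0 then (2:ℕ)^n else 0) + (if n = h-1 then (2:ℕ)^n else 0)
      + (if (t+1 ≤ n ∧ n ≤ h-2 ∧ n % 3 = (t+1)%3) then (2:ℕ)^n else 0) := by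
    intro n hn
    rw [Finset.mem_range] at hn
    rw [show Qlev h t n ↔ (n = 0 ∨ n = h - 1 ∨ (t+1 ≤ n ∧ n ≤ h-2 ∧ n % 3 = (t+1)%3)) from Iff.rfl]
    by_cases h0 : n = 0
    · rw [if_pos (Or.inl h0), if_pos h0, if_neg (by omega), if_neg (by omega)]
      omega
    · by_cases hh1 : n = h-1
      · rw [if_pos (Or.inr (Or.inl hh1)), if_neg h0, if_pos hh1,
          if_neg (by omega)]
        omega
      · by_cases hR : (t+1 ≤ n ∧ n ≤ h-2 ∧ n % 3 = (t+1)%3)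
        · rw [if_pos (Or.inr (Or.inr hR)), if_neg h0, if_neg hh1, if_pos hR]
          omega
        · have hnq : ¬ (n = 0 ∨ n = h - 1 ∨ (t+1 ≤ n ∧ n ≤ h-2 ∧ n % 3 = (t+1)%3)) := by
            intro hq
            rcases hq with hq|hq|hq
            exacts [h0 hq, hh1 hq, hR hq]
          rw [if_neg hnq, if_neg h0, if_neg hh1, if_neg hR]
  rw [hsplitSS, Finset.card_union_of_disjoint hdisj, hextra, hQ,
    Finset.sum_congr rfl hsplit, Finset.sum_add_distrib, Finset.sum_add_distrib]
  have hsum0 : (∑ n ∈ Finset.range (h+1), if n = 0 then (2:ℕ)^n else 0) = 1 := by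
    rw [Finset.sum_ite_eq' (Finset.range (h+1)) 0 (fun n => (2:ℕ)^n)]
    simp
  have hsumh1 : (∑ n ∈ Finset.range (h+1), if n = h-1 then (2:ℕ)^n else 0) = 2^(h-1) := by
    rw [Finset.sum_ite_eq' (Finset.range (h+1)) (h-1) (fun n => (2:ℕ)^n)]
    rw [if_pos (Finset.mem_range.2 (by omega))]
  have hsumR : (∑ n ∈ Finset.range (h+1),
      if (t+1 ≤ n ∧ n ≤ h-2 ∧ n % 3 = (t+1)%3) then (2:ℕ)^n else 0)
      = 2^(t+1) * ((8^m - 1)/7) := by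
    have hsub : (∑ n ∈ Finset.range (h-1), if (t+1 ≤ n ∧ n % 3 = (t+1)%3)
        then (2:ℕ)^n else 0)
        = ∑ n ∈ Finset.range (h+1),
          (if (t+1 ≤ n ∧ n ≤ h-2 ∧ n % 3 = (t+1)%3) then (2:ℕ)^n else 0) := by
      rw [← Finset.sum_subset (Finset.range_subset_range.2 (by omega : h-1 ≤ h+1))]
      · apply Finset.sum_congr rfl
        intro n hn
        rw [Finset.mem_range] at hn
        have hiff : (t+1 ≤ n ∧ n ≤ h-2 ∧ n % 3 = (t+1)%3) ↔ (t+1 ≤ n ∧ n % 3 = (t+1)%3) := by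
          constructor
          · rintro ⟨a,-,c⟩; exact ⟨a,c⟩
          · rintro ⟨a,c⟩; exact ⟨a, by omega, c⟩
        simp only [hiff]
      · intro n hn hnot
        rw [Finset.mem_range] at hn
        rw [Finset.mem_range] at hnot
        rw [if_neg (by omega)]
    rw [← hsub, sumProg (t+1) (h-1)]
    have hcount : ((h-1) + 2 - (t+1))/3 = m := by omega
    rw [hcount, geom_div]
  rw [hsum0, hsumh1, hsumR]
  by_cases ht2 : t = 2
  · rw [if_pos ht2, if_pos ht2]
    omega
  · rw [if_neg ht2, if_neg ht2]
    omega

end S13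

namespace S13
open scoped Classical

variable {h m t : ℕ}

def sval (t : ℕ) : ℕ := if t = 0 then 3 else t

lemma sval_cases (t : ℕ) : (t = 0 ∧ sval t = 3) ∨ (t ≠ 0 ∧ sval t = t) := by
  by_cases h0 : t = 0
  · exact Or.inl ⟨h0, by simp [sval, h0]⟩
  · exact Or.inr ⟨h0, by simp [sval, h0]⟩

/-- the packing broadcast -/
noncomputable def ff (h t : ℕ) (u : KVert 2 h) : ℕ :=
  (if u.1 = [] then sval t else 0)
  + (if (u.1.length = h ∧ u.1.take 2 = [0,0]) then 2 else 0)
  + (if (u.1.length = h ∧ u.1.take 2 = [0,1]) then 1 else 0)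
  + (if (sval t + 2 ≤ u.1.length ∧ u.1.length ≤ h - 4 ∧ u.1.length % 3 = (h-1) % 3
      ∧ u.1.take 1 = [0]) then 1 else 0)

lemma card_filter_len_take (P : ℕ → Prop) [DecidablePred P] (hP : ∀ n, P n → 1 ≤ n) :
    (Finset.univ.filter (fun u : KVert 2 h => P u.1.length ∧ u.1.take 1 = [0])).card
      = ∑ n ∈ Finset.range (h+1), if P n then (2:ℕ)^(n-1) else 0 := by
  rw [Finset.card_eq_sum_card_fiberwise
    (f := fun u : KVert 2 h => u.1.length) (t := Finset.range (h+1))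
    (fun u _ => Finset.mem_range.2 (Nat.lt_succ_of_le u.2))]
  apply Finset.sum_congr rfl
  intro n hn
  rw [Finset.mem_range] at hn
  by_cases hPn : P n
  · have hcl := card_level_take (h := h) n 1 [0] rfl (hP n hPn) (by omega)
    rw [if_pos hPn, ← hcl]
    congr 1
    ext u
    simp only [Finset.mem_filter, Finset.mem_univ, true_and]
    constructor
    · rintro ⟨⟨h1, h2⟩, h3⟩; exact ⟨h3, h2⟩
    · rintro ⟨h1, h2⟩; exact ⟨⟨h1 ▸ hPn, h2⟩, h1⟩
  · rw [if_neg hPn]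
    apply Finset.card_eq_zero.2
    apply Finset.eq_empty_iff_forall_notMem.2
    intro u hu
    simp only [Finset.mem_filter, Finset.mem_univ, true_and] at hu
    exact hPn (hu.2 ▸ hu.1.1)

lemma sum_indicator_card (p : KVert 2 h → Prop) [DecidablePred p] (c : ℕ) :
    (∑ u : KVert 2 h, if p u then c else 0)
      = c * (Finset.univ.filter (fun u : KVert 2 h => p u)).card := by
  rw [← Finset.sum_filter, Finset.sum_const, smul_eq_mul, mul_comm]

lemma ff_weight (hh : 4 ≤ h) (ht : t ≤ 2) (hmt : h = 3*m+t) :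
    (∑ u : KVert 2 h, ff h t u)
      = 2^(t+1) * ((8^m - 1)/7) + 2^(h-1) + (if t = 2 then 2 else 1) := by
  have hsv : 1 ≤ sval t ∧ sval t ≤ 3 ∧ (t = 0 ∧ sval t = 3 ∨ t ≠ 0 ∧ sval t = t) := by
    rcases sval_cases t with ⟨a,b⟩|⟨a,b⟩ <;> exact ⟨by omega, by omega, by tauto⟩
  obtain ⟨hsv1, hsv3, hsvc⟩ := hsv
  simp only [ff, Finset.sum_add_distrib]
  -- first summand
  have hS1 : (∑ u : KVert 2 h, if u.1 = [] then sval t else 0) = sval t := by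
    have hiff : ∀ u : KVert 2 h, (u.1 = []) ↔ (u = root 2 h) := by
      intro u
      constructor
      · intro hu; exact Subtype.ext hu
      · intro hu; rw [hu]; rfl
    calc (∑ u : KVert 2 h, if u.1 = [] then sval t else 0)
        = ∑ u : KVert 2 h, if u = root 2 h then sval t else 0 :=
          Finset.sum_congr rfl (fun u _ => by simp only [hiff])
      _ = sval t := by
          rw [Finset.sum_ite_eq' Finset.univ (root 2 h) (fun _ => sval t)]
          simp
  have hS2 : (∑ u : KVert 2 h, if (u.1.length = h ∧ u.1.take 2 = [0,0]) then 2 else 0)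
      = 2 * 2^(h-2) := by
    rw [sum_indicator_card, card_level_take h 2 [0,0] rfl (by omega) le_rfl]
  have hS3 : (∑ u : KVert 2 h, if (u.1.length = h ∧ u.1.take 2 = [0,1]) then 1 else 0)
      = 2^(h-2) := by
    rw [sum_indicator_card, card_level_take h 2 [0,1] rfl (by omega) le_rfl, one_mul]
  have hS4 : (∑ u : KVert 2 h, if (sval t + 2 ≤ u.1.length ∧ u.1.length ≤ h - 4
      ∧ u.1.length % 3 = (h-1) % 3 ∧ u.1.take 1 = [0]) then 1 else 0)
      = ∑ i ∈ Finset.range ((h - 3 - sval t)/3), 2^(sval t + 1 + 3*i) := by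
    have hre : ∀ u : KVert 2 h, (sval t + 2 ≤ u.1.length ∧ u.1.length ≤ h - 4
        ∧ u.1.length % 3 = (h-1) % 3 ∧ u.1.take 1 = [0]) ↔
        ((sval t + 2 ≤ u.1.length ∧ u.1.length ≤ h - 4 ∧ u.1.length % 3 = (h-1) % 3)
          ∧ u.1.take 1 = [0]) := by tauto
    calc (∑ u : KVert 2 h, if (sval t + 2 ≤ u.1.length ∧ u.1.length ≤ h - 4
        ∧ u.1.length % 3 = (h-1) % 3 ∧ u.1.take 1 = [0]) then (1:ℕ) else 0)
        = (Finset.univ.filter (fun u : KVert 2 h => (sval t + 2 ≤ u.1.length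
            ∧ u.1.length ≤ h - 4 ∧ u.1.length % 3 = (h-1) % 3) ∧ u.1.take 1 = [0])).card := by
          rw [sum_indicator_card _ 1, one_mul]
          congr 1
          apply Finset.filter_congr
          intro u _
          rw [hre u]
      _ = ∑ n ∈ Finset.range (h+1), if (sval t + 2 ≤ n ∧ n ≤ h - 4 ∧ n % 3 = (h-1) % 3)
            then (2:ℕ)^(n-1) else 0 := by
          refine card_filter_len_take
            (fun n => sval t + 2 ≤ n ∧ n ≤ h - 4 ∧ n % 3 = (h-1) % 3) ?_
          intro n hn
          omega
      _ = ∑ p ∈ Finset.range h, if (sval t + 1 ≤ p ∧ p % 3 = (sval t + 1) % 3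
            ∧ p ≤ h - 5) then (2:ℕ)^p else 0 := by
          rw [Finset.sum_range_succ']
          have hzero : (if (sval t + 2 ≤ 0 ∧ 0 ≤ h - 4 ∧ 0 % 3 = (h-1) % 3)
              then (2:ℕ)^(0-1) else 0) = 0 := by
            rw [if_neg (by omega)]
          rw [hzero, add_zero]
          apply Finset.sum_congr rfl
          intro p hp
          rw [Finset.mem_range] at hp
          have hiff : (sval t + 2 ≤ p + 1 ∧ p + 1 ≤ h - 4 ∧ (p+1) % 3 = (h-1) % 3)
              ↔ (sval t + 1 ≤ p ∧ p % 3 = (sval t + 1) % 3 ∧ p ≤ h - 5) := by omega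
          simp only [hiff, Nat.add_sub_cancel]
      _ = ∑ p ∈ Finset.range (h-4), if (sval t + 1 ≤ p ∧ p % 3 = (sval t + 1) % 3)
            then (2:ℕ)^p else 0 := by
          rw [← Finset.sum_subset (Finset.range_subset_range.2 (by omega : h-4 ≤ h))]
          · apply Finset.sum_congr rfl
            intro p hp
            rw [Finset.mem_range] at hp
            have hiff : (sval t + 1 ≤ p ∧ p % 3 = (sval t + 1) % 3 ∧ p ≤ h - 5)
                ↔ (sval t + 1 ≤ p ∧ p % 3 = (sval t + 1) % 3) := by
              constructor
              · rintro ⟨a,b,-⟩; exact ⟨a,b⟩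
              · rintro ⟨a,b⟩; exact ⟨a,b, by omega⟩
            simp only [hiff]
          · intro p hp hnot
            rw [Finset.mem_range] at hp
            rw [Finset.mem_range] at hnot
            rw [if_neg (by omega)]
      _ = _ := by
          rw [sumProg (sval t + 1) (h-4)]
          congr 2
          omega
  rw [hS1, hS2, hS3, hS4]
  -- final arithmetic
  have hgeo := geom_div (t+1) m
  rw [← hgeo]
  have hpows : (2:ℕ)^(h-1) = 2 * 2^(h-2) := by
    rw [← pow_succ']
    congr 1
    omega
  rcases hsvc with ⟨ht0, hs3⟩ | ⟨htn0, hst⟩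
  · -- t = 0, sval = 3, mc = m - 2
    subst ht0
    simp only [hs3]
    have hm2 : 2 ≤ m := by omega
    obtain ⟨m', rfl⟩ : ∃ m', m = m' + 2 := ⟨m - 2, by omega⟩
    have hmc : (h - 3 - 3)/3 = m' := by omega
    rw [hmc]
    have hpeel : (∑ i ∈ Finset.range (m' + 2), (2:ℕ)^(0+1+3*i))
        = (∑ i ∈ Finset.range (m' + 1), (2:ℕ)^(4+3*i)) + 2 := by
      rw [Finset.sum_range_succ']
      congr 1
      apply Finset.sum_congr rfl
      intro i _
      ring
    have hpeel2 : (∑ i ∈ Finset.range (m' + 1), (2:ℕ)^(4+3*i))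
        = (∑ i ∈ Finset.range m', (2:ℕ)^(4+3*i)) + 2^(h-2) := by
      rw [Finset.sum_range_succ]
      congr 2
      omega
    have hcong : (∑ i ∈ Finset.range m', (2:ℕ)^(3 + 1 + 3*i))
        = ∑ i ∈ Finset.range m', (2:ℕ)^(4+3*i) := by
      apply Finset.sum_congr rfl
      intro i _
      ring
    rw [hpeel, hpeel2, hcong]
    have h02 : (if (0:ℕ) = 2 then (2:ℕ) else 1) = 1 := by norm_num
    rw [h02]
    omega
  · -- t ≥ 1, sval = t, mc = m - 1
    simp only [hst]
    have hm1 : 1 ≤ m := by omega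
    obtain ⟨m', rfl⟩ : ∃ m', m = m' + 1 := ⟨m - 1, by omega⟩
    have hmc : (h - 3 - t)/3 = m' := by omega
    rw [hmc]
    have hpeel : (∑ i ∈ Finset.range (m' + 1), (2:ℕ)^(t+1+3*i))
        = (∑ i ∈ Finset.range m', (2:ℕ)^(t+1+3*i)) + 2^(h-2) := by
      rw [Finset.sum_range_succ]
      congr 2
      omega
    rw [hpeel]
    by_cases ht2 : t = 2
    · rw [if_pos ht2]
      omega
    · rw [if_neg ht2]
      omega

end S13



namespace S13
open scoped Classical

variable {h m t : ℕ}

lemma drop_eq_of_le_csuf {x y : List (Fin 2)} (hlen : x.length = y.length) (j : ℕ)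
    (hcs : x.length - j ≤ csuf x y) : x.drop j = y.drop j := by
  rcases Nat.lt_or_ge j x.length with hj | hj
  · have hcl := csuf_le_left x y
    have hc0 : x.length - csuf x y ≤ j := by omega
    have hs_x := csuf_drop_suffix x y
    have hlen_s : (x.drop (x.length - csuf x y)).length = csuf x y := by
      rw [List.length_drop]; omega
    have hsy : x.drop (x.length - csuf x y) = y.drop (x.length - csuf x y) := by
      have := List.suffix_iff_eq_drop.1 hs_x
      rw [hlen_s, ← hlen] at this
      exact this
    have h1 : List.drop (j - (x.length - csuf x y)) (x.drop (x.length - csuf x y))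
        = x.drop j := by
      rw [List.drop_drop]
      congr 1
      omega
    have h2 : List.drop (j - (x.length - csuf x y)) (y.drop (x.length - csuf x y))
        = y.drop j := by
      rw [List.drop_drop]
      congr 1
      omega
    rw [← h1, ← h2, hsy]
  · rw [List.drop_eq_nil_of_le hj, List.drop_eq_nil_of_le (by omega)]

lemma dist_ge_of_drop_ne (x y : KVert 2 h) (j : ℕ) (hlen : x.1.length = y.1.length)
    (hne : x.1.drop j ≠ y.1.drop j) :
    2 * (j + 1) ≤ (karyTree 2 h).dist x y := by
  have hcs : csuf x.1 y.1 + j + 1 ≤ x.1.length := by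
    by_contra hcon
    push_neg at hcon
    exact hne (drop_eq_of_le_csuf hlen j (by omega))
  have hd := dist_add_csuf x y
  omega

lemma dist_ge_len_diff (x y : KVert 2 h) :
    x.1.length - y.1.length ≤ (karyTree 2 h).dist x y := by
  have hd := dist_add_csuf x y
  have := csuf_le_right x.1 y.1
  omega

lemma expand_take2 {u : KVert 2 h} {b : Fin 2} (hu : u.1.take 2 = [0,b]) :
    u.1 = 0 :: b :: u.1.drop 2 := by
  conv_lhs => rw [← List.take_append_drop 2 u.1]
  rw [hu]
  rfl

lemma expand_take1 {u : KVert 2 h} (hu : u.1.take 1 = [0]) :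
    u.1 = 0 :: u.1.drop 1 := by
  conv_lhs => rw [← List.take_append_drop 1 u.1]
  rw [hu]
  rfl

lemma ff_cases (hu : 0 < ff h t u) :
    u.1 = [] ∨ (u.1.length = h ∧ u.1.take 2 = [0,0]) ∨ (u.1.length = h ∧ u.1.take 2 = [0,1])
      ∨ (sval t + 2 ≤ u.1.length ∧ u.1.length ≤ h - 4 ∧ u.1.length % 3 = (h-1)%3
          ∧ u.1.take 1 = [0]) := by
  by_cases h1 : u.1 = []
  · exact Or.inl h1
  by_cases h2 : (u.1.length = h ∧ u.1.take 2 = [0,0])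
  · exact Or.inr (Or.inl h2)
  by_cases h3 : (u.1.length = h ∧ u.1.take 2 = [0,1])
  · exact Or.inr (Or.inr (Or.inl h3))
  by_cases h4 : (sval t + 2 ≤ u.1.length ∧ u.1.length ≤ h - 4 ∧ u.1.length % 3 = (h-1)%3
      ∧ u.1.take 1 = [0])
  · exact Or.inr (Or.inr (Or.inr h4))
  exfalso
  rw [ff, if_neg h1, if_neg h2, if_neg h3, if_neg h4] at hu
  omega

lemma ff_of_root (hh : 4 ≤ h) {u : KVert 2 h} (hu : u.1 = []) : ff h t u = sval t := by
  have hlen : u.1.length = 0 := by rw [hu]; rfl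
  rw [ff, if_pos hu, if_neg (by omega), if_neg (by omega), if_neg (by
    rintro ⟨a, -⟩
    have : 1 ≤ sval t := by rcases sval_cases t with ⟨-,b⟩|⟨c,b⟩ <;> omega
    omega)]
  omega

lemma ff_of_A2 (hh : 4 ≤ h) {u : KVert 2 h} (hu : u.1.length = h ∧ u.1.take 2 = [0,0]) :
    ff h t u = 2 := by
  have hne : u.1 ≠ [] := by
    intro hc
    have : u.1.length = 0 := by rw [hc]; rfl
    omega
  rw [ff, if_neg hne, if_pos hu, if_neg (by
      rintro ⟨-, hc⟩
      rw [hu.2] at hc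
      simp at hc), if_neg (by rintro ⟨-, hb, -⟩; omega)]

lemma ff_of_A1 (hh : 4 ≤ h) {u : KVert 2 h} (hu : u.1.length = h ∧ u.1.take 2 = [0,1]) :
    ff h t u = 1 := by
  have hne : u.1 ≠ [] := by
    intro hc
    have : u.1.length = 0 := by rw [hc]; rfl
    omega
  rw [ff, if_neg hne, if_neg (by
      rintro ⟨-, hc⟩
      rw [hu.2] at hc
      simp at hc), if_pos hu, if_neg (by rintro ⟨-, hb, -⟩; omega)]

lemma ff_of_M (hh : 4 ≤ h) {u : KVert 2 h}
    (hu : sval t + 2 ≤ u.1.length ∧ u.1.length ≤ h - 4 ∧ u.1.length % 3 = (h-1)%3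
      ∧ u.1.take 1 = [0]) : ff h t u = 1 := by
  have hs1 : 1 ≤ sval t := by rcases sval_cases t with ⟨-,b⟩|⟨c,b⟩ <;> omega
  have hne : u.1 ≠ [] := by
    intro hc
    have : u.1.length = 0 := by rw [hc]; rfl
    omega
  rw [ff, if_neg hne, if_neg (by rintro ⟨hb, -⟩; omega),
    if_neg (by rintro ⟨hb, -⟩; omega), if_pos hu]

end S13

namespace S13
open scoped Classical

variable {h m t : ℕ}

lemma take1_of_take2 {u : KVert 2 h} {b : Fin 2} (hu : u.1.take 2 = [0,b]) :
    u.1.take 1 = [0] := by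
  have h1 : u.1.take 1 = (u.1.take 2).take 1 := by
    rw [List.take_take]
    norm_num
  rw [h1, hu]
  rfl

lemma drop1_of_take2 {u : KVert 2 h} {b : Fin 2} (hu : u.1.take 2 = [0,b]) :
    u.1.drop 1 = b :: u.1.drop 2 := by
  conv_lhs => rw [expand_take2 hu]
  rfl

lemma packing_key (hh : 4 ≤ h) (ht : t ≤ 2) (hmt : h = 3*m+t) :
    ∀ v w : KVert 2 h, 0 < ff h t v → 0 < ff h t w → v ≠ w →
      ff h t v + ff h t w < (karyTree 2 h).dist v w := by
  have hsh : sval t + 3 ≤ h := by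
    rcases sval_cases t with ⟨a,b⟩|⟨a,b⟩ <;> omega
  have hsv1 : 1 ≤ sval t ∧ sval t ≤ 3 := by
    rcases sval_cases t with ⟨a,b⟩|⟨a,b⟩ <;> exact ⟨by omega, by omega⟩
  intro v w hv hw hne
  have hlen0 : ∀ u : KVert 2 h, u.1 = [] → u.1.length = 0 := fun u hu => by rw [hu]; rfl
  rcases ff_cases hv with hv1 | hv2 | hv3 | hv4 <;>
    rcases ff_cases hw with hw1 | hw2 | hw3 | hw4
  · exact absurd (Subtype.ext (hv1.trans hw1.symm)) hne
  · -- R, A2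
    have hd := dist_ge_len_diff w v
    rw [SimpleGraph.dist_comm] at hd
    rw [ff_of_root hh hv1, ff_of_A2 hh hw2]
    have := hlen0 v hv1
    omega
  · have hd := dist_ge_len_diff w v
    rw [SimpleGraph.dist_comm] at hd
    rw [ff_of_root hh hv1, ff_of_A1 hh hw3]
    have := hlen0 v hv1
    omega
  · have hd := dist_ge_len_diff w v
    rw [SimpleGraph.dist_comm] at hd
    rw [ff_of_root hh hv1, ff_of_M hh hw4]
    have := hlen0 v hv1
    omega
  · -- A2, R
    have hd := dist_ge_len_diff v w
    rw [ff_of_A2 hh hv2, ff_of_root hh hw1]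
    have := hlen0 w hw1
    omega
  · -- A2, A2
    have hq : v.1.drop 2 ≠ w.1.drop 2 := by
      intro heq
      apply hne
      apply Subtype.ext
      rw [expand_take2 hv2.2, expand_take2 hw2.2, heq]
    have hd := dist_ge_of_drop_ne v w 2 (by omega) hq
    rw [ff_of_A2 hh hv2, ff_of_A2 hh hw2]
    omega
  · -- A2, A1
    have hq : v.1.drop 1 ≠ w.1.drop 1 := by
      rw [drop1_of_take2 hv2.2, drop1_of_take2 hw3.2]
      simp
    have hd := dist_ge_of_drop_ne v w 1 (by omega) hq
    rw [ff_of_A2 hh hv2, ff_of_A1 hh hw3]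
    omega
  · -- A2, M
    have hd := dist_ge_len_diff v w
    rw [ff_of_A2 hh hv2, ff_of_M hh hw4]
    omega
  · -- A1, R
    have hd := dist_ge_len_diff v w
    rw [ff_of_A1 hh hv3, ff_of_root hh hw1]
    have := hlen0 w hw1
    omega
  · -- A1, A2
    have hq : v.1.drop 1 ≠ w.1.drop 1 := by
      rw [drop1_of_take2 hv3.2, drop1_of_take2 hw2.2]
      simp
    have hd := dist_ge_of_drop_ne v w 1 (by omega) hq
    rw [ff_of_A1 hh hv3, ff_of_A2 hh hw2]
    omega
  · -- A1, A1
    have hq : v.1.drop 1 ≠ w.1.drop 1 := by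
      intro heq
      apply hne
      apply Subtype.ext
      rw [expand_take2 hv3.2, expand_take2 hw3.2]
      rw [drop1_of_take2 hv3.2, drop1_of_take2 hw3.2] at heq
      rw [List.cons.injEq] at heq
      rw [heq.2]
    have hd := dist_ge_of_drop_ne v w 1 (by omega) hq
    rw [ff_of_A1 hh hv3, ff_of_A1 hh hw3]
    omega
  · -- A1, M
    have hd := dist_ge_len_diff v w
    rw [ff_of_A1 hh hv3, ff_of_M hh hw4]
    omega
  · -- M, R
    have hd := dist_ge_len_diff v w
    rw [ff_of_M hh hv4, ff_of_root hh hw1]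
    have := hlen0 w hw1
    omega
  · -- M, A2
    have hd := dist_ge_len_diff w v
    rw [SimpleGraph.dist_comm] at hd
    rw [ff_of_M hh hv4, ff_of_A2 hh hw2]
    omega
  · -- M, A1
    have hd := dist_ge_len_diff w v
    rw [SimpleGraph.dist_comm] at hd
    rw [ff_of_M hh hv4, ff_of_A1 hh hw3]
    omega
  · -- M, M
    rw [ff_of_M hh hv4, ff_of_M hh hw4]
    rcases Nat.decEq v.1.length w.1.length with hl | hl
    · -- different lengths
      have hd1 := dist_ge_len_diff v w
      have hd2 := dist_ge_len_diff w v
      rw [SimpleGraph.dist_comm] at hd2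
      have h1 := hv4.2.2.1
      have h2 := hw4.2.2.1
      omega
    · -- same length
      have hq : v.1.drop 1 ≠ w.1.drop 1 := by
        intro heq
        apply hne
        apply Subtype.ext
        rw [expand_take1 hv4.2.2.2, expand_take1 hw4.2.2.2, heq]
      have hd := dist_ge_of_drop_ne v w 1 (by omega) hq
      omega

theorem ff_packing (hh : 4 ≤ h) (ht : t ≤ 2) (hmt : h = 3*m+t) :
    IsPackingBroadcast (karyTree 2 h) (ff h t) := by
  constructor
  · intro v
    rcases Nat.eq_zero_or_pos (ff h t v) with h0 | hpos
    · rw [h0]; exact Nat.zero_le _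
    · rcases ff_cases hpos with hc|hc|hc|hc
      · rw [ff_of_root hh hc]
        have hv : v = root 2 h := Subtype.ext hc
        rw [hv]
        have h1 := ecc_root_ge (k := 2) (h := h)
        have h2 : sval t ≤ 3 := by rcases sval_cases t with ⟨a,b⟩|⟨a,b⟩ <;> omega
        omega
      · rw [ff_of_A2 hh hc]
        have h1 := ecc_ge_len v
        omega
      · rw [ff_of_A1 hh hc]
        have h1 := ecc_ge_len v
        have h2 : 1 ≤ sval t := by rcases sval_cases t with ⟨a,b⟩|⟨a,b⟩ <;> omega
        omega
      · rw [ff_of_M hh hc]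
        have h1 := ecc_ge_len v
        have h2 : 1 ≤ sval t := by rcases sval_cases t with ⟨a,b⟩|⟨a,b⟩ <;> omega
        have h3 := hc.1
        omega
  · intro u
    intro v₁ hv₁ v₂ hv₂
    by_contra hne
    obtain ⟨hp1, hd1⟩ := hv₁
    obtain ⟨hp2, hd2⟩ := hv₂
    have htri := (connected (k := 2) (h := h)).dist_triangle (u := v₁) (v := u) (w := v₂)
    have hkey := packing_key hh ht hmt v₁ v₂ hp1 hp2 hne
    have hcomm : (karyTree 2 h).dist v₁ u = (karyTree 2 h).dist u v₁ :=
      SimpleGraph.dist_comm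
    omega

end S13

namespace S13

lemma weak_duality {V : Type*} [Fintype V] (G : SimpleGraph V) (f : V → ℕ) (S : Finset V)
    (hf : IsPackingBroadcast G f) (hS : IsMulticover G S) :
    (∑ v, f v) ≤ S.card := by
  classical
  have h1 : (∑ v, f v) = ∑ v ∈ Finset.univ.filter (fun v => 0 < f v), f v := by
    rw [Finset.sum_filter_of_ne]
    intro v _ hv
    omega
  rw [h1]
  have h2 : ∀ v ∈ Finset.univ.filter (fun v => 0 < f v),
      f v ≤ (S.filter (fun u => G.dist u v ≤ f v)).card := by
    intro v hv
    rw [Finset.mem_filter] at hv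
    exact hS v (f v) hv.2 (hf.1 v)
  have hd : ∀ v ∈ Finset.univ.filter (fun v => 0 < f v),
      ∀ w ∈ Finset.univ.filter (fun v => 0 < f v), v ≠ w →
      Disjoint (S.filter (fun u => G.dist u v ≤ f v)) (S.filter (fun u => G.dist u w ≤ f w)) := by
    intro v hv w hw hvw
    rw [Finset.mem_filter] at hv hw
    rw [Finset.disjoint_left]
    intro u hu1 hu2
    rw [Finset.mem_filter] at hu1 hu2
    have m1 : v ∈ {x | Hears G f u x} := ⟨hv.2, hu1.2⟩
    have m2 : w ∈ {x | Hears G f u x} := ⟨hw.2, hu2.2⟩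
    exact hvw (hf.2 u m1 m2)
  calc (∑ v ∈ Finset.univ.filter (fun v => 0 < f v), f v)
      ≤ ∑ v ∈ Finset.univ.filter (fun v => 0 < f v),
          (S.filter (fun u => G.dist u v ≤ f v)).card := Finset.sum_le_sum h2
    _ = ((Finset.univ.filter (fun v => 0 < f v)).biUnion
          (fun v => S.filter (fun u => G.dist u v ≤ f v))).card :=
        (Finset.card_biUnion hd).symm
    _ ≤ S.card := by
        apply Finset.card_le_card
        intro u hu
        rw [Finset.mem_biUnion] at hu
        obtain ⟨v, -, hv⟩ := hu
        exact Finset.mem_filter.1 hv |>.1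

end S13


/-- for the perfect binary tree of height `h = 3m + t ≥ 4` (`0 ≤ t ≤ 2`),
`P_b(T_h) = M_c(T_h) = 2^(t+1) · (8^m - 1)/7 + 2^(h-1) + b_t`, where `b_0 = b_1 = 1` and
`b_2 = 2`. -/
theorem stmt13 (h m t : ℕ) (hh : 4 ≤ h) (ht : t ≤ 2) (hmt : h = 3 * m + t) :
    Pb (karyTree 2 h) = Mc (karyTree 2 h) ∧
    Pb (karyTree 2 h) =
      2 ^ (t + 1) * ((8 ^ m - 1) / 7) + 2 ^ (h - 1) + (if t = 2 then 2 else 1) := by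
  have hfp := S13.ff_packing (m := m) hh ht hmt
  have hfw := S13.ff_weight (m := m) hh ht hmt
  have hmc := S13.SS_multicover (m := m) hh ht hmt
  have hscard := S13.SS_card (m := m) hh ht hmt
  set N := 2 ^ (t + 1) * ((8 ^ m - 1) / 7) + 2 ^ (h - 1) + (if t = 2 then 2 else 1) with hN
  have hNP : N ∈ {w | ∃ f, IsPackingBroadcast (karyTree 2 h) f ∧ w = ∑ v, f v} :=
    ⟨S13.ff h t, hfp, by rw [hfw]⟩
  have hNM : N ∈ {n | ∃ S : Finset (KVert 2 h), IsMulticover (karyTree 2 h) S ∧ n = S.card} :=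
    ⟨S13.SS h t, hmc, by rw [hscard]⟩
  have hub : ∀ a ∈ {w | ∃ f, IsPackingBroadcast (karyTree 2 h) f ∧ w = ∑ v, f v}, a ≤ N := by
    rintro a ⟨f, hf, rfl⟩
    calc (∑ v, f v) ≤ (S13.SS h t).card := S13.weak_duality _ f _ hf hmc
      _ = N := hscard
  have hlbM : ∀ b ∈ {n | ∃ S : Finset (KVert 2 h), IsMulticover (karyTree 2 h) S ∧ n = S.card},
      N ≤ b := by
    rintro b ⟨S, hS, rfl⟩
    calc N = ∑ v, S13.ff h t v := hfw.symm
      _ ≤ S.card := S13.weak_duality _ _ _ hfp hS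
  have hPb : Pb (karyTree 2 h) = N := by
    apply le_antisymm
    · exact csSup_le ⟨N, hNP⟩ hub
    · exact le_csSup ⟨N, fun y hy => hub y hy⟩ hNP
  have hMc : Mc (karyTree 2 h) = N := by
    apply le_antisymm
    · exact Nat.sInf_le hNM
    · exact le_csInf ⟨N, hNM⟩ hlbM
  exact ⟨hPb.trans hMc.symm, hPb⟩
end

section
/- Let T_h^k be a perfect k-ary tree with k ≥ 3 and height h = 3m + t ≥ 3 with 0 ≤ t ≤ 2. Let S ⊆ V(T_h^k) consist of: (1) all vertices at level h−1; (2) all vertices at levels h−2, h−5, …, 1+t (the levels congruent to h−2 modulo 3 that are at least 1+t); and (3) the root when t = 1, or all k vertices at level 1 when t = 2 (nothing extra when t = 0). Then S is a multicover of T_h^k. -/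
variable {V : Type*}

section Stmt14Helpers

variable {k h : ℕ}

private lemma kary_exists_walk (w : List (Fin k)) (pf' : w.length ≤ h) :
    ∀ (x : List (Fin k)) (pf : (x ++ w).length ≤ h),
      ∃ p : (karyTree k h).Walk ⟨x ++ w, pf⟩ ⟨w, pf'⟩, p.length = x.length
  | [], pf => ⟨SimpleGraph.Walk.nil, rfl⟩
  | a :: x, pf => by
      obtain ⟨p, hp⟩ := kary_exists_walk w pf' x (by simp at pf ⊢; omega)
      have hadj : (karyTree k h).Adj ⟨a :: x ++ w, pf⟩ ⟨x ++ w, by simp at pf ⊢; omega⟩ :=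
        Or.inl ⟨a, rfl⟩
      exact ⟨SimpleGraph.Walk.cons hadj p, by simp [hp]⟩

private lemma kary_dist_le (u v : KVert k h) (x y s : List (Fin k))
    (hu : u.1 = x ++ s) (hv : v.1 = y ++ s) :
    (karyTree k h).dist u v ≤ x.length + y.length := by
  have hs : s.length ≤ h := by
    have := u.2; rw [hu] at this; simp at this; omega
  have hux : (x ++ s).length ≤ h := by rw [← hu]; exact u.2
  have hvy : (y ++ s).length ≤ h := by rw [← hv]; exact v.2
  obtain ⟨p, hp⟩ := kary_exists_walk (h := h) s hs x hux
  obtain ⟨q, hq⟩ := kary_exists_walk (h := h) s hs y hvy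
  have hu' : u = ⟨x ++ s, hux⟩ := Subtype.ext hu
  have hv' : v = ⟨y ++ s, hvy⟩ := Subtype.ext hv
  rw [hu', hv']
  have := SimpleGraph.dist_le (p.append q.reverse)
  simpa [hp, hq] using this

/-- The family of all descendants at depth `n` below the `j`-th ancestor of `v`. -/
private def Fam (v : KVert k h) (j n : ℕ) (pf : n + (v.1.length - j) ≤ h) :
    Finset (KVert k h) :=
  Finset.image (fun f : Fin n → Fin k =>
    (⟨List.ofFn f ++ v.1.drop j, by
        simp only [List.length_append, List.length_ofFn, List.length_drop]; omega⟩ :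
      KVert k h)) Finset.univ

private lemma card_Fam (v : KVert k h) (j n : ℕ) (pf : n + (v.1.length - j) ≤ h) :
    (Fam v j n pf).card = k ^ n := by
  rw [Fam, Finset.card_image_of_injective _ ?_, Finset.card_univ, Fintype.card_fun,
    Fintype.card_fin, Fintype.card_fin]
  intro f g hfg
  simp only [Subtype.mk.injEq] at hfg
  exact List.ofFn_injective (List.append_cancel_right hfg)

private lemma length_of_mem_Fam {v : KVert k h} {j n : ℕ} {pf : n + (v.1.length - j) ≤ h}
    {u : KVert k h} (hu : u ∈ Fam v j n pf) : u.1.length = n + (v.1.length - j) := by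
  rw [Fam, Finset.mem_image] at hu
  obtain ⟨f, _, rfl⟩ := hu
  simp

private lemma dist_of_mem_Fam {v : KVert k h} {j n : ℕ} {pf : n + (v.1.length - j) ≤ h}
    {u : KVert k h} (hu : u ∈ Fam v j n pf) : (karyTree k h).dist u v ≤ n + j := by
  rw [Fam, Finset.mem_image] at hu
  obtain ⟨f, _, rfl⟩ := hu
  have h1 := kary_dist_le (h := h)
    ⟨List.ofFn f ++ v.1.drop j, by
      simp only [List.length_append, List.length_ofFn, List.length_drop]; omega⟩ v
    (List.ofFn f) (v.1.take j) (v.1.drop j) rfl (List.take_append_drop j v.1).symm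
  have h2 : (v.1.take j).length ≤ j := by simp
  simp only [List.length_ofFn] at h1
  omega

/-- The set of levels occupied by the multicover. -/
private def inL (h t q : ℕ) : Prop :=
  q = h - 1 ∨ (q % 3 = (h - 2) % 3 ∧ 1 + t ≤ q ∧ q ≤ h - 2) ∨ (t = 1 ∧ q = 0) ∨
    (t = 2 ∧ q = 1)

private lemma arith1 (n : ℕ) (hn : 1 ≤ n) : n + 2 ≤ 3 ^ n := by
  induction n with
  | zero => omega
  | succ n ih =>
    rcases Nat.eq_zero_or_pos n with rfl | hp
    · simp
    · have := ih hp
      have h3 : (3:ℕ) ^ (n+1) = 3 * 3 ^ n := by ring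
      omega

private lemma arith2 (e : ℕ) : e + 2 ≤ 2 * 3 ^ e := by
  induction e with
  | zero => simp
  | succ e ih =>
    have h3 : (3:ℕ) ^ (e+1) = 3 * 3 ^ e := by ring
    omega

private lemma arith3 (e : ℕ) (he : 1 ≤ e) : 2 * e + 3 ≤ 2 * 3 ^ e := by
  induction e with
  | zero => omega
  | succ e ih =>
    rcases Nat.eq_zero_or_pos e with rfl | hp
    · norm_num
    · have := ih hp
      have h3 : (3:ℕ) ^ (e+1) = 3 * 3 ^ e := by ring
      omega

private lemma deep_arith (e1 e2 r : ℕ) (h1 : e2 ≤ e1) (h2 : e1 ≤ e2 + 1)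
    (h3 : r ≤ 2 * e1 + 2) (h4 : r ≤ 2 * e2 + 3 ∨ e1 = e2 + 1) :
    r ≤ 3 ^ e1 + 3 ^ e2 := by
  rcases h4 with h4 | h4
  · rcases Nat.eq_zero_or_pos e2 with he2 | hp
    · have hpos : 1 ≤ 3 ^ e1 := Nat.one_le_pow _ _ (by norm_num)
      have he2' : (3:ℕ) ^ e2 = 1 := by rw [he2]; norm_num
      rcases Nat.eq_zero_or_pos e1 with he1 | hp1
      · have he1' : (3:ℕ) ^ e1 = 1 := by rw [he1]; norm_num
        omega
      · have h31 : (3:ℕ) ^ 1 ≤ 3 ^ e1 := Nat.pow_le_pow_right (by norm_num) hp1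
        have : (3:ℕ) ^ 1 = 3 := by norm_num
        omega
    · have ha := arith3 e2 hp
      have hb : (3:ℕ) ^ e2 ≤ 3 ^ e1 := Nat.pow_le_pow_right (by norm_num) h1
      omega
  · have ha := arith2 e2
    have hb : (3:ℕ) ^ e1 = 3 * 3 ^ e2 := by rw [h4]; ring
    omega

private lemma inL_top {h t q : ℕ} (h1 : q = h - 1) : inL h t q := Or.inl h1

private lemma inL_mid {h t q : ℕ} (h1 : q % 3 = (h - 2) % 3) (h2 : 1 + t ≤ q)
    (h3 : q ≤ h - 2) : inL h t q := Or.inr (Or.inl ⟨h1, h2, h3⟩)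

private lemma inL_root {h q : ℕ} (h2 : q = 0) : inL h 1 q :=
  Or.inr (Or.inr (Or.inl ⟨rfl, h2⟩))

private lemma inL_one {h q : ℕ} (h2 : q = 1) : inL h 2 q :=
  Or.inr (Or.inr (Or.inr ⟨rfl, h2⟩))

private lemma lemC1 (h t m p : ℕ) (hh : 3 ≤ h) (ht : t ≤ 2) (hmt : h = 3 * m + t)
    (hp : p ≤ h) :
    inL h t p ∨ (p + 1 ≤ h ∧ inL h t (p + 1)) ∨ (1 ≤ p ∧ inL h t (p - 1)) := by
  obtain ⟨s, hs⟩ : ∃ s, p = 3 * s ∨ p = 3 * s + 1 ∨ p = 3 * s + 2 := ⟨p / 3, by omega⟩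
  interval_cases t
  · -- t = 0
    rcases hs with hs | hs | hs
    · by_cases hph : p = h
      · exact Or.inr (Or.inr ⟨by omega, inL_top (by omega)⟩)
      · exact Or.inr (Or.inl ⟨by omega, inL_mid (by omega) (by omega) (by omega)⟩)
    · exact Or.inl (inL_mid (by omega) (by omega) (by omega))
    · exact Or.inr (Or.inr ⟨by omega, inL_mid (by omega) (by omega) (by omega)⟩)
  · -- t = 1
    rcases hs with hs | hs | hs
    · by_cases hp0 : p = 0
      · exact Or.inl (inL_root hp0)
      · by_cases hph : p = h - 1
        · exact Or.inl (inL_top hph)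
        · exact Or.inr (Or.inr ⟨by omega, inL_mid (by omega) (by omega) (by omega)⟩)
    · by_cases hph : p = h
      · exact Or.inr (Or.inr ⟨by omega, inL_top (by omega)⟩)
      · exact Or.inr (Or.inl ⟨by omega, inL_mid (by omega) (by omega) (by omega)⟩)
    · exact Or.inl (inL_mid (by omega) (by omega) (by omega))
  · -- t = 2
    rcases hs with hs | hs | hs
    · by_cases hp0 : p = 0
      · exact Or.inr (Or.inl ⟨by omega, inL_one (by omega)⟩)
      · exact Or.inl (inL_mid (by omega) (by omega) (by omega))
    · by_cases hp1 : p = 1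
      · exact Or.inl (inL_one hp1)
      · by_cases hph : p = h - 1
        · exact Or.inl (inL_top hph)
        · exact Or.inr (Or.inr ⟨by omega, inL_mid (by omega) (by omega) (by omega)⟩)
    · by_cases hph : p = h
      · exact Or.inr (Or.inr ⟨by omega, inL_top (by omega)⟩)
      · exact Or.inr (Or.inl ⟨by omega, inL_mid (by omega) (by omega) (by omega)⟩)

private lemma lemC2 (h t m p : ℕ) (hh : 3 ≤ h) (ht : t ≤ 2) (hmt : h = 3 * m + t)
    (hp : p + 1 ≤ h) :
    inL h t (p + 1) ∨ (1 ≤ p ∧ inL h t p) ∨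
      (p = 0 ∧ inL h t 0 ∧ inL h t 2 ∧ 2 ≤ h) ∨
      (1 ≤ p ∧ inL h t (p - 1) ∧ inL h t (p + 2) ∧ p + 2 ≤ h) := by
  obtain ⟨s, hs⟩ : ∃ s, p = 3 * s ∨ p = 3 * s + 1 ∨ p = 3 * s + 2 := ⟨p / 3, by omega⟩
  interval_cases t
  · -- t = 0
    rcases hs with hs | hs | hs
    · exact Or.inl (inL_mid (by omega) (by omega) (by omega))
    · exact Or.inr (Or.inl ⟨by omega, inL_mid (by omega) (by omega) (by omega)⟩)
    · by_cases hph : p = h - 1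
      · exact Or.inr (Or.inl ⟨by omega, inL_top hph⟩)
      · exact Or.inr (Or.inr (Or.inr ⟨by omega,
          inL_mid (by omega) (by omega) (by omega),
          inL_mid (by omega) (by omega) (by omega), by omega⟩))
  · -- t = 1
    rcases hs with hs | hs | hs
    · by_cases hp0 : p = 0
      · exact Or.inr (Or.inr (Or.inl ⟨hp0, inL_root rfl,
          inL_mid (by omega) (by omega) (by omega), by omega⟩))
      · by_cases hph : p = h - 1
        · exact Or.inr (Or.inl ⟨by omega, inL_top hph⟩)
        · exact Or.inr (Or.inr (Or.inr ⟨by omega,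
            inL_mid (by omega) (by omega) (by omega),
            inL_mid (by omega) (by omega) (by omega), by omega⟩))
    · exact Or.inl (inL_mid (by omega) (by omega) (by omega))
    · exact Or.inr (Or.inl ⟨by omega, inL_mid (by omega) (by omega) (by omega)⟩)
  · -- t = 2
    rcases hs with hs | hs | hs
    · by_cases hp0 : p = 0
      · exact Or.inl (inL_one (by omega))
      · exact Or.inr (Or.inl ⟨by omega, inL_mid (by omega) (by omega) (by omega)⟩)
    · by_cases hp1 : p = 1
      · exact Or.inr (Or.inl ⟨by omega, inL_one hp1⟩)
      · by_cases hph : p = h - 1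
        · exact Or.inr (Or.inl ⟨by omega, inL_top hph⟩)
        · exact Or.inr (Or.inr (Or.inr ⟨by omega,
            inL_mid (by omega) (by omega) (by omega),
            inL_mid (by omega) (by omega) (by omega), by omega⟩))
    · exact Or.inl (inL_mid (by omega) (by omega) (by omega))

private lemma lemD (h t m p : ℕ) (hh : 3 ≤ h) (ht : t ≤ 2) (hmt : h = 3 * m + t)
    (hp : p ≤ h - 1) :
    ∃ q, inL h t q ∧ p ≤ q ∧ q ≤ p + 2 ∧ q ≤ h - 1 := by
  obtain ⟨s, hs⟩ : ∃ s, p = 3 * s ∨ p = 3 * s + 1 ∨ p = 3 * s + 2 := ⟨p / 3, by omega⟩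
  interval_cases t
  · -- t = 0
    rcases hs with hs | hs | hs
    · exact ⟨p + 1, inL_mid (by omega) (by omega) (by omega), by omega, by omega,
        by omega⟩
    · exact ⟨p, inL_mid (by omega) (by omega) (by omega), by omega, by omega, by omega⟩
    · by_cases hph : p = h - 1
      · exact ⟨p, inL_top hph, by omega, by omega, by omega⟩
      · exact ⟨p + 2, inL_mid (by omega) (by omega) (by omega), by omega, by omega,
          by omega⟩
  · -- t = 1
    rcases hs with hs | hs | hs
    · by_cases hph : p = h - 1
      · exact ⟨p, inL_top hph, by omega, by omega, by omega⟩
      · by_cases hp0 : p = 0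
        · exact ⟨2, inL_mid (by omega) (by omega) (by omega), by omega, by omega,
            by omega⟩
        · exact ⟨p + 2, inL_mid (by omega) (by omega) (by omega), by omega, by omega,
            by omega⟩
    · exact ⟨p + 1, inL_mid (by omega) (by omega) (by omega), by omega, by omega,
        by omega⟩
    · exact ⟨p, inL_mid (by omega) (by omega) (by omega), by omega, by omega, by omega⟩
  · -- t = 2
    rcases hs with hs | hs | hs
    · by_cases hp0 : p = 0
      · exact ⟨1, inL_one rfl, by omega, by omega, by omega⟩
      · exact ⟨p, inL_mid (by omega) (by omega) (by omega), by omega, by omega,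
          by omega⟩
    · by_cases hph : p = h - 1
      · exact ⟨p, inL_top hph, by omega, by omega, by omega⟩
      · exact ⟨p + 2, inL_mid (by omega) (by omega) (by omega), by omega, by omega,
          by omega⟩
    · exact ⟨p + 1, inL_mid (by omega) (by omega) (by omega), by omega, by omega,
        by omega⟩

private lemma single_T (t : ℕ) (v : KVert k h) (r j n : ℕ)
    (pf : n + (v.1.length - j) ≤ h)
    (hL : inL h t (n + (v.1.length - j)))
    (hd : n + j ≤ r)
    (hcard : r ≤ k ^ n) :
    ∃ T : Finset (KVert k h),
      (∀ u ∈ T, inL h t u.1.length ∧ (karyTree k h).dist u v ≤ r) ∧ r ≤ T.card := by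
  refine ⟨Fam v j n pf, fun u hu => ?_, ?_⟩
  · have hl := length_of_mem_Fam hu
    have hdu := dist_of_mem_Fam hu
    rw [hl]
    exact ⟨hL, hdu.trans hd⟩
  · rw [card_Fam]; exact hcard

private lemma pair_T (t : ℕ) (v : KVert k h) (r j1 n1 j2 n2 : ℕ)
    (pf1 : n1 + (v.1.length - j1) ≤ h) (pf2 : n2 + (v.1.length - j2) ≤ h)
    (hL1 : inL h t (n1 + (v.1.length - j1))) (hL2 : inL h t (n2 + (v.1.length - j2)))
    (hd1 : n1 + j1 ≤ r) (hd2 : n2 + j2 ≤ r)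
    (hne : n1 + (v.1.length - j1) ≠ n2 + (v.1.length - j2))
    (hcard : r ≤ k ^ n1 + k ^ n2) :
    ∃ T : Finset (KVert k h),
      (∀ u ∈ T, inL h t u.1.length ∧ (karyTree k h).dist u v ≤ r) ∧ r ≤ T.card := by
  refine ⟨Fam v j1 n1 pf1 ∪ Fam v j2 n2 pf2, fun u hu => ?_, ?_⟩
  · rcases Finset.mem_union.mp hu with hu | hu
    · have hl := length_of_mem_Fam hu
      have hdu := dist_of_mem_Fam hu
      rw [hl]
      exact ⟨hL1, hdu.trans hd1⟩
    · have hl := length_of_mem_Fam hu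
      have hdu := dist_of_mem_Fam hu
      rw [hl]
      exact ⟨hL2, hdu.trans hd2⟩
  · have hdisj : Disjoint (Fam v j1 n1 pf1) (Fam v j2 n2 pf2) := by
      rw [Finset.disjoint_left]
      intro u hu1 hu2
      exact hne ((length_of_mem_Fam hu1).symm.trans (length_of_mem_Fam hu2))
    rw [Finset.card_union_of_disjoint hdisj, card_Fam, card_Fam]
    exact hcard

end Stmt14Helpers

set_option maxHeartbeats 2000000 in
/-- for the perfect `k`-ary tree (`k ≥ 3`) of height `h = 3m + t ≥ 3`
(`0 ≤ t ≤ 2`), the set consisting of all vertices at level `h-1`, all vertices at the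
levels `h-2, h-5, …, 1+t`, together with the root if `t = 1` and all `k` vertices at
level `1` if `t = 2` (nothing extra when `t = 0`), is a multicover. -/
theorem stmt14 (k h m t : ℕ) (hk : 3 ≤ k) (hh : 3 ≤ h) (ht : t ≤ 2) (hmt : h = 3 * m + t) :
    IsMulticover (karyTree k h)
      (Finset.univ.filter (fun v : KVert k h =>
        v.1.length = h - 1 ∨
        (v.1.length % 3 = (h - 2) % 3 ∧ 1 + t ≤ v.1.length ∧ v.1.length ≤ h - 2) ∨
        (t = 1 ∧ v.1.length = 0) ∨
        (t = 2 ∧ v.1.length = 1))) := by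
  intro v r hr1 hr2
  classical
  set ℓ := v.1.length with hldef
  have hlv : ℓ ≤ h := v.2
  suffices hS : ∃ T : Finset (KVert k h),
      (∀ u ∈ T, inL h t u.1.length ∧ (karyTree k h).dist u v ≤ r) ∧ r ≤ T.card by
    obtain ⟨T, hT, hc⟩ := hS
    refine hc.trans (Finset.card_le_card fun u hu => ?_)
    obtain ⟨hu1, hu2⟩ := hT u hu
    simp only [Finset.mem_filter, Finset.mem_univ, true_and]
    unfold inL at hu1
    exact ⟨hu1, hu2⟩
  have hdub : ∀ u : KVert k h, (karyTree k h).dist u v ≤ u.1.length + ℓ := fun u => by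
    have := kary_dist_le u v u.1 v.1 [] (by simp) (by simp)
    simpa using this
  have hA : r ≤ h + ℓ := by
    refine hr2.trans (Finset.sup_le fun u _ => ?_)
    have := hdub u; have h2 := u.2; omega
  have hB : ℓ = 0 → r ≤ h := by
    intro h0
    refine hr2.trans (Finset.sup_le fun u _ => ?_)
    have := hdub u; have h2 := u.2; omega
  by_cases hdeep : h + 2 ≤ ℓ + r
  · -- deep regime: harvest full sublevels h-1 and h-2 below suitable ancestors
    have hl1 : 1 ≤ ℓ := by
      rcases Nat.eq_zero_or_pos ℓ with h0 | h0
      · have := hB h0; omega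
      · exact h0
    have hinL1 : inL h t (h - 1) := inL_top rfl
    have hinL2 : inL h t (h - 2) := inL_mid rfl (by omega) (by omega)
    set j1 := min ((r + ℓ + 1 - h) / 2) ℓ with hj1
    set j2 := min ((r + ℓ + 2 - h) / 2) ℓ with hj2
    set n1 := h - 1 - (ℓ - j1) with hn1
    set n2 := h - 2 - (ℓ - j2) with hn2
    have hlen1 : n1 + (ℓ - j1) = h - 1 := by omega
    have hlen2 : n2 + (ℓ - j2) = h - 2 := by omega
    have hcard : r ≤ k ^ n1 + k ^ n2 := by
      have c1 : 3 ^ n1 ≤ k ^ n1 := Nat.pow_le_pow_left hk _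
      have c2 : 3 ^ n2 ≤ k ^ n2 := Nat.pow_le_pow_left hk _
      have := deep_arith n1 n2 r (by omega) (by omega) (by omega) (by omega)
      omega
    exact pair_T t v r j1 n1 j2 n2 (by omega) (by omega) (hlen1 ▸ hinL1)
      (hlen2 ▸ hinL2) (by omega) (by omega) (by omega) hcard
  · -- shallow regime
    have hshallow : ℓ + r ≤ h + 1 := by omega
    by_cases hr3 : 3 ≤ r
    · -- single big family below v
      obtain ⟨q, hq, hq1, hq2, hq3⟩ := lemD h t m (ℓ + r - 2) hh ht hmt (by omega)
      have hq2 : q ≤ ℓ + r := by omega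
      have hcard : r ≤ k ^ (q - ℓ) := by
        have ha := arith1 (r - 2) (by omega)
        have hb : (3:ℕ) ^ (r - 2) ≤ 3 ^ (q - ℓ) :=
          Nat.pow_le_pow_right (by norm_num) (by omega)
        have hc : (3:ℕ) ^ (q - ℓ) ≤ k ^ (q - ℓ) := Nat.pow_le_pow_left hk _
        omega
      have hLq : inL h t (q - ℓ + (ℓ - 0)) := by
        have he : q - ℓ + (ℓ - 0) = q := by omega
        rw [he]; exact hq
      exact single_T t v r 0 (q - ℓ) (by omega) hLq (by omega) hcard
    · have honek : ∀ n : ℕ, 1 ≤ k ^ n := fun n => Nat.one_le_pow _ _ (by omega)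
      have hk1 : 2 ≤ k ^ 1 := by rw [pow_one]; omega
      by_cases hre : r = 1
      · subst hre
        have hC1 := lemC1 h t m ℓ hh ht hmt hlv
        rcases hC1 with hc | ⟨hle, hc⟩ | ⟨hle, hc⟩
        · have hL : inL h t (0 + (ℓ - 0)) := by
            have he : 0 + (ℓ - 0) = ℓ := by omega
            rw [he]; exact hc
          exact single_T t v 1 0 0 (by omega) hL (by omega) (honek 0)
        · have hL : inL h t (1 + (ℓ - 0)) := by
            have he : 1 + (ℓ - 0) = ℓ + 1 := by omega
            rw [he]; exact hc
          exact single_T t v 1 0 1 (by omega) hL (by omega) (honek 1)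
        · have hL : inL h t (0 + (ℓ - 1)) := by
            have he : 0 + (ℓ - 1) = ℓ - 1 := by omega
            rw [he]; exact hc
          exact single_T t v 1 1 0 (by omega) hL (by omega) (honek 0)
      · have hre2 : r = 2 := by omega
        subst hre2
        have hC2 := lemC2 h t m ℓ hh ht hmt (by omega)
        rcases hC2 with hc | ⟨hle, hc⟩ | ⟨hl0, hc0, hc2, hc2h⟩ | ⟨hle, hcm, hcp, hcph⟩
        · have hL : inL h t (1 + (ℓ - 0)) := by
            have he : 1 + (ℓ - 0) = ℓ + 1 := by omega
            rw [he]; exact hc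
          exact single_T t v 2 0 1 (by omega) hL (by omega) hk1
        · have hL : inL h t (1 + (ℓ - 1)) := by
            have he : 1 + (ℓ - 1) = ℓ := by omega
            rw [he]; exact hc
          exact single_T t v 2 1 1 (by omega) hL (by omega) hk1
        · have hL1 : inL h t (0 + (ℓ - 0)) := by
            have he : 0 + (ℓ - 0) = 0 := by omega
            rw [he]; exact hc0
          have hL2 : inL h t (2 + (ℓ - 0)) := by
            have he : 2 + (ℓ - 0) = 2 := by omega
            rw [he]; exact hc2
          have hcard : 2 ≤ k ^ 0 + k ^ 2 := by
            have := honek 2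
            have h00 : k ^ 0 = 1 := pow_zero k
            omega
          exact pair_T t v 2 0 0 0 2 (by omega) (by omega) hL1 hL2 (by omega)
            (by omega) (by omega) hcard
        · have hL1 : inL h t (0 + (ℓ - 1)) := by
            have he : 0 + (ℓ - 1) = ℓ - 1 := by omega
            rw [he]; exact hcm
          have hL2 : inL h t (2 + (ℓ - 0)) := by
            have he : 2 + (ℓ - 0) = ℓ + 2 := by omega
            rw [he]; exact hcp
          have hcard : 2 ≤ k ^ 0 + k ^ 2 := by
            have := honek 2
            have h00 : k ^ 0 = 1 := pow_zero k
            omega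
          exact pair_T t v 2 1 0 0 2 (by omega) (by omega) hL1 hL2 (by omega)
            (by omega) (by omega) hcard
end
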